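/- arXiv:2410.11599 — 5 statements merged into one kernel-verified Lean document; each statement's English description precedes it below -/
import Mathlib

section
/- Let m ≥ 2 and let v = (a_1,…,a_m), w = (b_1,…,b_m) ∈ ℤ^m satisfy w = v·β for some virtual braid word β on m strands. Then: (i) d(v) = d(w); (ii) Δ(v) ≡ Δ(w) (mod 2d(v)); (iii) b_{π_β(i)} ≡ a_i (mod 2d(v)) for every i = 1,…,m; (iv) M(v)_{2d(v)} = M(w)_{2d(w)}. (Congruence mod 0 means equality in ℤ.) -/
/-- Alternating sum `Δ(v) = Σ (-1)^i * v i` (0-indexed; `(-1)^(i-1) a_i` in 1-indexed terms). -/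
def Delta {m : ℕ} (v : Fin m → ℤ) : ℤ :=
  ∑ i : Fin m, (-1 : ℤ) ^ (i : ℕ) * v i

/-- `d(v)`: the (nonnegative) gcd of all pairwise differences of the entries of `v`;
for nonempty `v` this equals `gcd {v i - v 0 : i}`. -/
def dgcd {m : ℕ} (v : Fin m → ℤ) : ℤ :=
  Finset.univ.gcd (fun p : Fin m × Fin m => v p.1 - v p.2)

/-- `M(v)_N`: the multiset of residues of the entries of `v` modulo `N`
(for `N = 0` this is the multiset of the entries themselves). -/
def resM {m : ℕ} (v : Fin m → ℤ) (N : ℤ) : Multiset ℤ :=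
  (Finset.univ.val : Multiset (Fin m)).map (fun i => v i % N)

/-- The Hurwitz move `v·σ_i` (0-indexed `i`). -/
def sigmaAct {m : ℕ} (i : Fin (m - 1)) (v : Fin m → ℤ) : Fin m → ℤ :=
  have h : (i : ℕ) < m - 1 := i.isLt
  fun j =>
    if (j : ℕ) = (i : ℕ) then v ⟨(i : ℕ) + 1, by omega⟩
    else if (j : ℕ) = (i : ℕ) + 1 then
      2 * v ⟨(i : ℕ) + 1, by omega⟩ - v ⟨(i : ℕ), by omega⟩
    else v j

/-- The inverse Hurwitz move `v·σ_i⁻¹` (0-indexed `i`). -/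
def sigmaInvAct {m : ℕ} (i : Fin (m - 1)) (v : Fin m → ℤ) : Fin m → ℤ :=
  have h : (i : ℕ) < m - 1 := i.isLt
  fun j =>
    if (j : ℕ) = (i : ℕ) then 2 * v ⟨(i : ℕ), by omega⟩ - v ⟨(i : ℕ) + 1, by omega⟩
    else if (j : ℕ) = (i : ℕ) + 1 then v ⟨(i : ℕ), by omega⟩
    else v j

/-- The virtual move `v·τ_i`: swap the `i`-th and `(i+1)`-st entries (0-indexed `i`). -/
def tauAct {m : ℕ} (i : Fin (m - 1)) (v : Fin m → ℤ) : Fin m → ℤ :=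
  have h : (i : ℕ) < m - 1 := i.isLt
  fun j =>
    if (j : ℕ) = (i : ℕ) then v ⟨(i : ℕ) + 1, by omega⟩
    else if (j : ℕ) = (i : ℕ) + 1 then v ⟨(i : ℕ), by omega⟩
    else v j

/-- Hurwitz equivalence: the equivalence relation on `ℤ^m` generated by `v ∼ v·σ_i`. -/
def HurwitzEquiv {m : ℕ} : (Fin m → ℤ) → (Fin m → ℤ) → Prop :=
  Relation.EqvGen (fun v w => ∃ i : Fin (m - 1), w = sigmaAct i v)

/-- A letter of a braid word: an index `i` and a sign (`true` = `σ_i`, `false` = `σ_i⁻¹`). -/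
abbrev BraidLetter (m : ℕ) := Fin (m - 1) × Bool

/-- Action of a single braid letter. -/
def braidLetterAct {m : ℕ} (l : BraidLetter m) (v : Fin m → ℤ) : Fin m → ℤ :=
  if l.2 then sigmaAct l.1 v else sigmaInvAct l.1 v

/-- Action `v·β` of a braid word (letters applied in order). -/
def braidWordAct {m : ℕ} (β : List (BraidLetter m)) (v : Fin m → ℤ) : Fin m → ℤ :=
  β.foldl (fun w l => braidLetterAct l w) v

/-- The transposition `(i, i+1)` of `Fin m` associated to the index `i`. -/
def letterPerm {m : ℕ} (i : Fin (m - 1)) : Equiv.Perm (Fin m) :=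
  have h : (i : ℕ) < m - 1 := i.isLt
  Equiv.swap ⟨(i : ℕ), by omega⟩ ⟨(i : ℕ) + 1, by omega⟩

/-- The underlying permutation `π_β` of a braid word: the product, composed in
the same order as the letters are applied, of the transpositions `(i, i+1)`. -/
def braidWordPerm {m : ℕ} (β : List (BraidLetter m)) : Equiv.Perm (Fin m) :=
  β.foldl (fun p l => letterPerm l.1 * p) 1

/-- Pure-braid Hurwitz equivalence: related by a braid word with trivial
underlying permutation. -/
def PureEquiv {m : ℕ} (v w : Fin m → ℤ) : Prop :=
  ∃ β : List (BraidLetter m), braidWordAct β v = w ∧ braidWordPerm β = 1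

/-- A letter of a virtual braid word: `(i, none)` = `τ_i`, `(i, some true)` = `σ_i`,
`(i, some false)` = `σ_i⁻¹`. -/
abbrev VBraidLetter (m : ℕ) := Fin (m - 1) × Option Bool

/-- Action of a single virtual braid letter. -/
def vletterAct {m : ℕ} (l : VBraidLetter m) (v : Fin m → ℤ) : Fin m → ℤ :=
  match l.2 with
  | none => tauAct l.1 v
  | some true => sigmaAct l.1 v
  | some false => sigmaInvAct l.1 v

/-- Action `v·β` of a virtual braid word (letters applied in order). -/
def vwordAct {m : ℕ} (β : List (VBraidLetter m)) (v : Fin m → ℤ) : Fin m → ℤ :=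
  β.foldl (fun w l => vletterAct l w) v

/-- The underlying permutation `π_β` of a virtual braid word. -/
def vwordPerm {m : ℕ} (β : List (VBraidLetter m)) : Equiv.Perm (Fin m) :=
  β.foldl (fun p l => letterPerm l.1 * p) 1

/-- Virtual braid equivalence: `w = v·β` for some virtual braid word `β`. -/
def VirtualEquiv {m : ℕ} (v w : Fin m → ℤ) : Prop :=
  ∃ β : List (VBraidLetter m), vwordAct β v = w

/-- Virtual-pure-braid equivalence: related by a virtual braid word with trivial
underlying permutation. -/
def VPureEquiv {m : ℕ} (v w : Fin m → ℤ) : Prop :=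
  ∃ β : List (VBraidLetter m), vwordAct β v = w ∧ vwordPerm β = 1


namespace Stmt15Aux

variable {m : ℕ}

/-- The index `i` as an element of `Fin m`. -/
def fidx0 (i : Fin (m - 1)) : Fin m :=
  have h := i.isLt; ⟨(i : ℕ), by omega⟩

/-- The index `i+1` as an element of `Fin m`. -/
def fidx1 (i : Fin (m - 1)) : Fin m :=
  have h := i.isLt; ⟨(i : ℕ) + 1, by omega⟩

lemma fidx_ne (i : Fin (m - 1)) : fidx0 i ≠ fidx1 i := by
  simp [fidx0, fidx1, Fin.ext_iff]

lemma dgcd_dvd (v : Fin m → ℤ) (j k : Fin m) : dgcd v ∣ v j - v k :=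
  Finset.gcd_dvd (Finset.mem_univ ((j, k) : Fin m × Fin m))

lemma dgcd_nonneg (v : Fin m → ℤ) : 0 ≤ dgcd v := by
  rw [dgcd, ← Finset.normalize_gcd, ← Int.abs_eq_normalize]
  exact abs_nonneg _

lemma sigma_at0 (i : Fin (m - 1)) (v : Fin m → ℤ) :
    sigmaAct i v (fidx0 i) = v (fidx1 i) := by
  simp [sigmaAct, fidx0, fidx1]

lemma sigma_at1 (i : Fin (m - 1)) (v : Fin m → ℤ) :
    sigmaAct i v (fidx1 i) = 2 * v (fidx1 i) - v (fidx0 i) := by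
  simp [sigmaAct, fidx0, fidx1]

lemma sigma_other (i : Fin (m - 1)) (v : Fin m → ℤ) (j : Fin m)
    (h0 : (j : ℕ) ≠ (i : ℕ)) (h1 : (j : ℕ) ≠ (i : ℕ) + 1) : sigmaAct i v j = v j := by
  simp [sigmaAct, h0, h1]

lemma sigmaInv_at0 (i : Fin (m - 1)) (v : Fin m → ℤ) :
    sigmaInvAct i v (fidx0 i) = 2 * v (fidx0 i) - v (fidx1 i) := by
  simp [sigmaInvAct, fidx0, fidx1]

lemma sigmaInv_at1 (i : Fin (m - 1)) (v : Fin m → ℤ) :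
    sigmaInvAct i v (fidx1 i) = v (fidx0 i) := by
  simp [sigmaInvAct, fidx0, fidx1]

lemma sigmaInv_other (i : Fin (m - 1)) (v : Fin m → ℤ) (j : Fin m)
    (h0 : (j : ℕ) ≠ (i : ℕ)) (h1 : (j : ℕ) ≠ (i : ℕ) + 1) : sigmaInvAct i v j = v j := by
  simp [sigmaInvAct, h0, h1]

lemma tau_at0 (i : Fin (m - 1)) (v : Fin m → ℤ) :
    tauAct i v (fidx0 i) = v (fidx1 i) := by
  simp [tauAct, fidx0, fidx1]

lemma tau_at1 (i : Fin (m - 1)) (v : Fin m → ℤ) :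
    tauAct i v (fidx1 i) = v (fidx0 i) := by
  simp [tauAct, fidx0, fidx1]

lemma tau_other (i : Fin (m - 1)) (v : Fin m → ℤ) (j : Fin m)
    (h0 : (j : ℕ) ≠ (i : ℕ)) (h1 : (j : ℕ) ≠ (i : ℕ) + 1) : tauAct i v j = v j := by
  simp [tauAct, h0, h1]

/-- Per-letter difference: every entry changes by `0` or `±(v_{i+1} - v_i)`,
so the change is divisible both by `dgcd v` and by `dgcd` of the new vector. -/
lemma letter_diff (l : VBraidLetter m) (v : Fin m → ℤ) (j : Fin m) :
    dgcd v ∣ vletterAct l v j - v j ∧ dgcd (vletterAct l v) ∣ vletterAct l v j - v j := by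
  obtain ⟨i, b⟩ := l
  set w := vletterAct (i, b) v with hw
  set c : ℤ := v (fidx1 i) - v (fidx0 i) with hc
  have hvc : dgcd v ∣ c := dgcd_dvd v _ _
  have hwc : dgcd w ∣ c := by
    have h10 : w (fidx1 i) - w (fidx0 i) = c ∨ w (fidx0 i) - w (fidx1 i) = c := by
      rcases b with _ | b
      · right
        simp only [hw, vletterAct, tau_at0, tau_at1, hc]
      · cases b
        · left
          simp only [hw, vletterAct, sigmaInv_at0, sigmaInv_at1, hc]; ring
        · left
          simp only [hw, vletterAct, sigma_at0, sigma_at1, hc]; ring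
    rcases h10 with h | h
    · exact h ▸ dgcd_dvd w _ _
    · exact h ▸ dgcd_dvd w _ _
  have key : w j - v j = 0 ∨ w j - v j = c ∨ w j - v j = -c := by
    by_cases h0 : (j : ℕ) = (i : ℕ)
    · have hj : j = fidx0 i := Fin.ext h0
      subst hj
      rcases b with _ | b
      · right; left; simp only [hw, vletterAct, tau_at0, hc]
      · cases b
        · right; right; simp only [hw, vletterAct, sigmaInv_at0, hc]; ring
        · right; left; simp only [hw, vletterAct, sigma_at0, hc]
    · by_cases h1 : (j : ℕ) = (i : ℕ) + 1
      · have hj : j = fidx1 i := Fin.ext h1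
        subst hj
        rcases b with _ | b
        · right; right; simp only [hw, vletterAct, tau_at1, hc]; ring
        · cases b
          · right; right; simp only [hw, vletterAct, sigmaInv_at1, hc]; ring
          · right; left; simp only [hw, vletterAct, sigma_at1, hc]; ring
      · left
        rcases b with _ | b
        · simp only [hw, vletterAct, tau_other i v j h0 h1]; ring
        · cases b
          · simp only [hw, vletterAct, sigmaInv_other i v j h0 h1]; ring
          · simp only [hw, vletterAct, sigma_other i v j h0 h1]; ring
  rcases key with h | h | h
  · rw [h]; exact ⟨dvd_zero _, dvd_zero _⟩
  · rw [h]; exact ⟨hvc, hwc⟩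
  · rw [h]; exact ⟨hvc.neg_right, hwc.neg_right⟩

lemma dgcd_letter (l : VBraidLetter m) (v : Fin m → ℤ) :
    dgcd (vletterAct l v) = dgcd v := by
  set w := vletterAct l v with hw
  have h1 : dgcd v ∣ dgcd w := by
    apply Finset.dvd_gcd
    rintro ⟨j, k⟩ -
    have e : w j - w k = (w j - v j) - (w k - v k) + (v j - v k) := by ring
    exact e ▸ dvd_add (dvd_sub (letter_diff l v j).1 (letter_diff l v k).1) (dgcd_dvd v j k)
  have h2 : dgcd w ∣ dgcd v := by
    apply Finset.dvd_gcd
    rintro ⟨j, k⟩ -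
    have e : v j - v k = (w k - v k) - (w j - v j) + (w j - w k) := by ring
    exact e ▸ dvd_add (dvd_sub (letter_diff l v k).2 (letter_diff l v j).2) (dgcd_dvd w j k)
  exact Int.dvd_antisymm (dgcd_nonneg w) (dgcd_nonneg v) h2 h1

lemma dgcd_word (β : List (VBraidLetter m)) (v : Fin m → ℤ) :
    dgcd (vwordAct β v) = dgcd v := by
  induction β generalizing v with
  | nil => rfl
  | cons l β ih =>
      have e : vwordAct (l :: β) v = vwordAct β (vletterAct l v) := rfl
      rw [e, ih, dgcd_letter]

lemma letterPerm_eq (i : Fin (m - 1)) : letterPerm i = Equiv.swap (fidx0 i) (fidx1 i) := rfl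

/-- Per-letter congruence along the permutation. -/
lemma letter_perm_dvd (l : VBraidLetter m) (v : Fin m → ℤ) (j : Fin m) :
    2 * dgcd v ∣ vletterAct l v (letterPerm l.1 j) - v j := by
  obtain ⟨i, b⟩ := l
  have hp : letterPerm (i, b).1 = Equiv.swap (fidx0 i) (fidx1 i) := rfl
  rw [hp]
  by_cases h0 : (j : ℕ) = (i : ℕ)
  · have hj : j = fidx0 i := Fin.ext h0
    subst hj
    rw [Equiv.swap_apply_left]
    rcases b with _ | b
    · simp only [vletterAct, tau_at1, sub_self, dvd_zero]
    · cases b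
      · simp only [vletterAct, sigmaInv_at1, sub_self, dvd_zero]
      · simp only [vletterAct, sigma_at1]
        have e : 2 * v (fidx1 i) - v (fidx0 i) - v (fidx0 i) = 2 * (v (fidx1 i) - v (fidx0 i)) := by
          ring
        exact e ▸ mul_dvd_mul_left 2 (dgcd_dvd v _ _)
  · by_cases h1 : (j : ℕ) = (i : ℕ) + 1
    · have hj : j = fidx1 i := Fin.ext h1
      subst hj
      rw [Equiv.swap_apply_right]
      rcases b with _ | b
      · simp only [vletterAct, tau_at0, sub_self, dvd_zero]
      · cases b
        · simp only [vletterAct, sigmaInv_at0]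
          have e : 2 * v (fidx0 i) - v (fidx1 i) - v (fidx1 i) = 2 * (v (fidx0 i) - v (fidx1 i)) := by
            ring
          exact e ▸ mul_dvd_mul_left 2 (dgcd_dvd v _ _)
        · simp only [vletterAct, sigma_at0, sub_self, dvd_zero]
    · have hj0 : j ≠ fidx0 i := fun h => h0 (by rw [h]; rfl)
      have hj1 : j ≠ fidx1 i := fun h => h1 (by rw [h]; rfl)
      rw [Equiv.swap_apply_of_ne_of_ne hj0 hj1]
      rcases b with _ | b
      · simp only [vletterAct, tau_other i v j h0 h1, sub_self, dvd_zero]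
      · cases b
        · simp only [vletterAct, sigmaInv_other i v j h0 h1, sub_self, dvd_zero]
        · simp only [vletterAct, sigma_other i v j h0 h1, sub_self, dvd_zero]

lemma vwordPerm_aux (β : List (VBraidLetter m)) (q : Equiv.Perm (Fin m)) :
    β.foldl (fun p l => letterPerm l.1 * p) q = vwordPerm β * q := by
  induction β generalizing q with
  | nil => simp [vwordPerm]
  | cons l β ih =>
      have h1 : vwordPerm (l :: β) = vwordPerm β * (letterPerm l.1 * 1) := ih (letterPerm l.1 * 1)
      rw [List.foldl_cons, ih (letterPerm l.1 * q), h1]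
      group

lemma vwordPerm_cons (l : VBraidLetter m) (β : List (VBraidLetter m)) :
    vwordPerm (l :: β) = vwordPerm β * letterPerm l.1 := by
  have : vwordPerm (l :: β) = β.foldl (fun p l => letterPerm l.1 * p) (letterPerm l.1 * 1) := rfl
  rw [this, vwordPerm_aux, mul_one]

lemma word_perm_dvd (β : List (VBraidLetter m)) (v : Fin m → ℤ) (j : Fin m) :
    2 * dgcd v ∣ vwordAct β v (vwordPerm β j) - v j := by
  induction β generalizing v j with
  | nil => simp [vwordAct, vwordPerm]
  | cons l β ih =>
      have h1 := ih (vletterAct l v) (letterPerm l.1 j)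
      rw [dgcd_letter] at h1
      have h2 := letter_perm_dvd l v j
      have e : vwordAct (l :: β) v = vwordAct β (vletterAct l v) := rfl
      have ep : vwordPerm (l :: β) j = vwordPerm β (letterPerm l.1 j) := by
        rw [vwordPerm_cons]; rfl
      rw [e, ep]
      have e2 : vwordAct β (vletterAct l v) (vwordPerm β (letterPerm l.1 j)) - v j =
          (vwordAct β (vletterAct l v) (vwordPerm β (letterPerm l.1 j)) -
            vletterAct l v (letterPerm l.1 j)) +
          (vletterAct l v (letterPerm l.1 j) - v j) := by ring
      rw [e2]
      exact dvd_add h1 h2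

lemma delta_letter (l : VBraidLetter m) (v : Fin m → ℤ) :
    2 * dgcd v ∣ Delta (vletterAct l v) - Delta v := by
  obtain ⟨i, b⟩ := l
  set w := vletterAct (i, b) v with hw
  have e : Delta w - Delta v = ∑ j : Fin m, (-1 : ℤ) ^ (j : ℕ) * (w j - v j) := by
    simp only [Delta, ← Finset.sum_sub_distrib, mul_sub]
  rw [e]
  have hvanish : ∀ j ∈ Finset.univ, j ∉ ({fidx0 i, fidx1 i} : Finset (Fin m)) →
      (-1 : ℤ) ^ (j : ℕ) * (w j - v j) = 0 := by
    intro j _ hj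
    simp only [Finset.mem_insert, Finset.mem_singleton, not_or] at hj
    have h0 : (j : ℕ) ≠ (i : ℕ) := fun h => hj.1 (Fin.ext h)
    have h1 : (j : ℕ) ≠ (i : ℕ) + 1 := fun h => hj.2 (Fin.ext h)
    have : w j = v j := by
      rcases b with _ | b
      · exact tau_other i v j h0 h1
      · cases b
        · exact sigmaInv_other i v j h0 h1
        · exact sigma_other i v j h0 h1
    rw [this]; ring
  rw [← Finset.sum_subset (Finset.subset_univ {fidx0 i, fidx1 i}) hvanish,
      Finset.sum_pair (fidx_ne i)]
  have hpow : ((-1 : ℤ)) ^ ((fidx1 i : Fin m) : ℕ) = -(-1 : ℤ) ^ ((fidx0 i : Fin m) : ℕ) := by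
    have : ((fidx1 i : Fin m) : ℕ) = ((fidx0 i : Fin m) : ℕ) + 1 := rfl
    rw [this, pow_succ]; ring
  rcases b with _ | b
  · have e0 : w (fidx0 i) = v (fidx1 i) := tau_at0 i v
    have e1 : w (fidx1 i) = v (fidx0 i) := tau_at1 i v
    rw [e0, e1, hpow]
    have e3 : (-1 : ℤ) ^ ((fidx0 i : Fin m) : ℕ) * (v (fidx1 i) - v (fidx0 i)) +
        -(-1 : ℤ) ^ ((fidx0 i : Fin m) : ℕ) * (v (fidx0 i) - v (fidx1 i)) =
        ((-1 : ℤ) ^ ((fidx0 i : Fin m) : ℕ)) * (2 * (v (fidx1 i) - v (fidx0 i))) := by ring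
    rw [e3]
    exact (mul_dvd_mul_left 2 (dgcd_dvd v _ _)).mul_left _
  · cases b
    · have e0 : w (fidx0 i) = 2 * v (fidx0 i) - v (fidx1 i) := sigmaInv_at0 i v
      have e1 : w (fidx1 i) = v (fidx0 i) := sigmaInv_at1 i v
      rw [e0, e1, hpow]
      have e3 : (-1 : ℤ) ^ ((fidx0 i : Fin m) : ℕ) * (2 * v (fidx0 i) - v (fidx1 i) - v (fidx0 i)) +
          -(-1 : ℤ) ^ ((fidx0 i : Fin m) : ℕ) * (v (fidx0 i) - v (fidx1 i)) = 0 := by ring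
      rw [e3]
      exact dvd_zero _
    · have e0 : w (fidx0 i) = v (fidx1 i) := sigma_at0 i v
      have e1 : w (fidx1 i) = 2 * v (fidx1 i) - v (fidx0 i) := sigma_at1 i v
      rw [e0, e1, hpow]
      have e3 : (-1 : ℤ) ^ ((fidx0 i : Fin m) : ℕ) * (v (fidx1 i) - v (fidx0 i)) +
          -(-1 : ℤ) ^ ((fidx0 i : Fin m) : ℕ) * (2 * v (fidx1 i) - v (fidx0 i) - v (fidx1 i)) = 0 := by
        ring
      rw [e3]
      exact dvd_zero _

lemma delta_word (β : List (VBraidLetter m)) (v : Fin m → ℤ) :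
    2 * dgcd v ∣ Delta (vwordAct β v) - Delta v := by
  induction β generalizing v with
  | nil => simp [vwordAct]
  | cons l β ih =>
      have h1 := ih (vletterAct l v)
      rw [dgcd_letter] at h1
      have e : vwordAct (l :: β) v = vwordAct β (vletterAct l v) := rfl
      rw [e]
      have e2 : Delta (vwordAct β (vletterAct l v)) - Delta v =
          (Delta (vwordAct β (vletterAct l v)) - Delta (vletterAct l v)) +
          (Delta (vletterAct l v) - Delta v) := by ring
      rw [e2]
      exact dvd_add h1 (delta_letter l v)

lemma resM_word (β : List (VBraidLetter m)) (v : Fin m → ℤ) :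
    resM (vwordAct β v) (2 * dgcd v) = resM v (2 * dgcd v) := by
  set N := 2 * dgcd v with hN
  set w := vwordAct β v with hwdef
  set π := vwordPerm β with hπ
  have key : ∀ j : Fin m, w (π j) % N = v j % N := by
    intro j
    have h : N ∣ w (π j) - v j := word_perm_dvd β v j
    exact ((Int.modEq_iff_dvd.mpr h : v j ≡ w (π j) [ZMOD N])).symm
  have huniv : (Finset.univ.val : Multiset (Fin m)).map ⇑π = Finset.univ.val := by
    have h := congrArg Finset.val (Finset.map_univ_equiv (π : Fin m ≃ Fin m))
    simpa using h
  calc resM w N = (Finset.univ.val : Multiset (Fin m)).map (fun j => w j % N) := rfl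
    _ = ((Finset.univ.val : Multiset (Fin m)).map ⇑π).map (fun j => w j % N) := by rw [huniv]
    _ = (Finset.univ.val : Multiset (Fin m)).map (fun j => w (π j) % N) := by
        rw [Multiset.map_map]; rfl
    _ = (Finset.univ.val : Multiset (Fin m)).map (fun j => v j % N) :=
        Multiset.map_congr rfl (fun j _ => key j)
    _ = resM v N := rfl

end Stmt15Aux

/-- invariance under virtual braid words: if `w = v·β` then
(i) `d(v) = d(w)`; (ii) `Δ(v) ≡ Δ(w) (mod 2d(v))`;
(iii) `b_{π_β(i)} ≡ a_i (mod 2d(v))` for all `i`; (iv) `M(v)_{2d(v)} = M(w)_{2d(w)}`. -/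

theorem stmt_15 (m : ℕ) (hm : 2 ≤ m) (v : Fin m → ℤ) (β : List (VBraidLetter m)) :
    dgcd v = dgcd (vwordAct β v) ∧
    Delta v ≡ Delta (vwordAct β v) [ZMOD 2 * dgcd v] ∧
    (∀ i : Fin m, vwordAct β v (vwordPerm β i) ≡ v i [ZMOD 2 * dgcd v]) ∧
    resM v (2 * dgcd v) = resM (vwordAct β v) (2 * dgcd (vwordAct β v)) := by
  refine ⟨(Stmt15Aux.dgcd_word β v).symm, ?_, ?_, ?_⟩
  · exact Int.modEq_iff_dvd.mpr (Stmt15Aux.delta_word β v)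
  · intro i
    exact (Int.modEq_iff_dvd.mpr (Stmt15Aux.word_perm_dvd β v i)).symm
  · rw [Stmt15Aux.dgcd_word β v]
    exact (Stmt15Aux.resM_word β v).symm
end

section
/- For all integers x, λ, d, n with d > 0, the elements (x, x+λd, x+d) and (x, x+(λ+2n)d, x+d) of ℤ³ are virtual-pure-braid equivalent: (x, x+λd, x+d) ∼_{vP} (x, x+(λ+2n)d, x+d). -/
theorem my_vwordAct_append {m : ℕ} (b1 b2 : List (VBraidLetter m)) (v : Fin m → ℤ) :
    vwordAct (b1 ++ b2) v = vwordAct b2 (vwordAct b1 v) :=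
  List.foldl_append

theorem my_vwordPerm_foldl {m : ℕ} (b : List (VBraidLetter m)) (p : Equiv.Perm (Fin m)) :
    b.foldl (fun p l => letterPerm l.1 * p) p = vwordPerm b * p := by
  induction b generalizing p with
  | nil => simp [vwordPerm]
  | cons l t ih =>
      simp only [vwordPerm, List.foldl_cons, mul_one]
      rw [ih (letterPerm l.1 * p), ih (letterPerm l.1), mul_assoc]

theorem my_vwordPerm_append {m : ℕ} (b1 b2 : List (VBraidLetter m)) :
    vwordPerm (b1 ++ b2) = vwordPerm b2 * vwordPerm b1 := by
  have : vwordPerm (b1 ++ b2) = b2.foldl (fun p l => letterPerm l.1 * p) (vwordPerm b1) := by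
    simp [vwordPerm, List.foldl_append]
  rw [this, my_vwordPerm_foldl]

theorem my_VPure_trans {m : ℕ} {u v w : Fin m → ℤ} (h1 : VPureEquiv u v)
    (h2 : VPureEquiv v w) : VPureEquiv u w := by
  obtain ⟨b1, ha1, hp1⟩ := h1
  obtain ⟨b2, ha2, hp2⟩ := h2
  exact ⟨b1 ++ b2, by rw [my_vwordAct_append, ha1, ha2],
    by rw [my_vwordPerm_append, hp1, hp2, mul_one]⟩

def myStepUp : List (VBraidLetter 3) :=
  [(0, some false), (0, none), (1, some true), (1, none)]

def myStepDown : List (VBraidLetter 3) :=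
  [(1, none), (1, some false), (0, none), (0, some true)]

theorem my_stepUp (a b c : ℤ) : VPureEquiv ![a, b, c] ![a, b + 2 * c - 2 * a, c] := by
  refine ⟨myStepUp, ?_, by decide⟩
  funext j
  fin_cases j <;>
    (simp [myStepUp, vwordAct, vletterAct, sigmaAct, sigmaInvAct, tauAct]; try ring)

theorem my_stepDown (a b c : ℤ) : VPureEquiv ![a, b, c] ![a, b - 2 * c + 2 * a, c] := by
  refine ⟨myStepDown, ?_, by decide⟩
  funext j
  fin_cases j <;>
    (simp [myStepDown, vwordAct, vletterAct, sigmaAct, sigmaInvAct, tauAct]; try ring)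

/-- `(x, x+λd, x+d) ∼_{vP} (x, x+(λ+2n)d, x+d)` for all `x, λ, n` and `d > 0`. -/
theorem stmt_16 (x lam d n : ℤ) (hd : 0 < d) :
    VPureEquiv ![x, x + lam * d, x + d] ![x, x + (lam + 2 * n) * d, x + d] := by
  induction n using Int.induction_on with
  | zero =>
      refine ⟨[], ?_, rfl⟩
      have h : (lam + 2 * (0:ℤ)) * d = lam * d := by ring
      simp [vwordAct, h]
  | succ k ih =>
      refine my_VPure_trans ih ?_
      have h := my_stepUp x (x + (lam + 2 * k) * d) (x + d)
      have he : x + (lam + 2 * k) * d + 2 * (x + d) - 2 * x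
          = x + (lam + 2 * (k + 1)) * d := by ring
      rwa [he] at h
  | pred k ih =>
      refine my_VPure_trans ih ?_
      have h := my_stepDown x (x + (lam + 2 * (-k)) * d) (x + d)
      have he : x + (lam + 2 * (-k)) * d - 2 * (x + d) + 2 * x
          = x + (lam + 2 * (-k - 1)) * d := by ring
      rwa [he] at h
end

section
/- Let m ≥ 3, let v ∈ ℤ^m be nontrivial (i.e. d(v) > 0), and let n be any integer. Then there exists v' ∈ ℤ^m such that v' ∼_{vP} v (virtual-pure-braid equivalence) and Δ(v') = Δ(v) + 2n·d(v). -/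
section Stmt17Aux
variable {m : ℕ}

-- ===== Part 0 : word bookkeeping =====

lemma vwordAct_append (β₁ β₂ : List (VBraidLetter m)) (v : Fin m → ℤ) :
    vwordAct (β₁ ++ β₂) v = vwordAct β₂ (vwordAct β₁ v) :=
  List.foldl_append

lemma vwordPerm_foldl (β : List (VBraidLetter m)) (p : Equiv.Perm (Fin m)) :
    β.foldl (fun p l => letterPerm l.1 * p) p = vwordPerm β * p := by
  induction β generalizing p with
  | nil => simp [vwordPerm]
  | cons a β ih =>
      simp only [List.foldl_cons, vwordPerm]
      rw [ih, ih (letterPerm a.1 * 1)]; group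

lemma vwordPerm_append (β₁ β₂ : List (VBraidLetter m)) :
    vwordPerm (β₁ ++ β₂) = vwordPerm β₂ * vwordPerm β₁ := by
  unfold vwordPerm
  rw [List.foldl_append]
  exact vwordPerm_foldl β₂ _

lemma vwordPerm_cons (a : VBraidLetter m) (β : List (VBraidLetter m)) :
    vwordPerm (a :: β) = vwordPerm β * letterPerm a.1 := by
  show (a :: β).foldl (fun p l => letterPerm l.1 * p) 1 = _
  rw [List.foldl_cons, vwordPerm_foldl, mul_one]

lemma VPureEquiv.refl' (v : Fin m → ℤ) : VPureEquiv v v := ⟨[], rfl, rfl⟩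

lemma VPureEquiv.trans' {u v w : Fin m → ℤ} (h1 : VPureEquiv u v) (h2 : VPureEquiv v w) :
    VPureEquiv u w := by
  obtain ⟨β₁, ha1, hp1⟩ := h1
  obtain ⟨β₂, ha2, hp2⟩ := h2
  exact ⟨β₁ ++ β₂, by rw [vwordAct_append, ha1, ha2], by rw [vwordPerm_append, hp1, hp2, mul_one]⟩

-- ===== Part 1 : reflection words =====

/-- Reflection of entry `i` around entry `j`. -/
def refMap (i j : Fin m) (v : Fin m → ℤ) : Fin m → ℤ :=
  Function.update v i (2 * v j - v i)

lemma refMap_apply (i j : Fin m) (v : Fin m → ℤ) (t : Fin m) :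
    refMap i j v t = if t = i then 2 * v j - v i else v t :=
  Function.update_apply v i _ t

lemma refMap_involutive {i j : Fin m} (hij : i ≠ j) (v : Fin m → ℤ) :
    refMap i j (refMap i j v) = v := by
  have e1 : refMap i j v j = v j := by rw [refMap_apply, if_neg hij.symm]
  have e2 : refMap i j v i = 2 * v j - v i := by rw [refMap_apply, if_pos rfl]
  funext t
  rw [refMap_apply]
  by_cases h : t = i
  · rw [if_pos h, e1, e2, h]; ring
  · rw [if_neg h, refMap_apply, if_neg h]

section atLemmas
variable (i : Fin (m - 1)) (v : Fin m → ℤ)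

lemma fin_lt0 : (i : ℕ) < m := by have := i.isLt; omega
lemma fin_lt1 : (i : ℕ) + 1 < m := by have := i.isLt; omega

lemma tauAct_at0 : tauAct i v ⟨(i : ℕ), fin_lt0 i⟩ = v ⟨(i : ℕ) + 1, fin_lt1 i⟩ := by
  show (if ((i:ℕ) = (i:ℕ)) then _ else _) = _
  rw [if_pos rfl]

lemma tauAct_at1 : tauAct i v ⟨(i : ℕ) + 1, fin_lt1 i⟩ = v ⟨(i : ℕ), fin_lt0 i⟩ := by
  show (if ((i:ℕ) + 1 = (i:ℕ)) then _ else if ((i:ℕ) + 1 = (i:ℕ) + 1) then _ else _) = _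
  rw [if_neg (by omega), if_pos rfl]

lemma tauAct_other (t : Fin m) (h1 : (t:ℕ) ≠ (i:ℕ)) (h2 : (t:ℕ) ≠ (i:ℕ) + 1) :
    tauAct i v t = v t := by
  show (if _ then _ else if _ then _ else _) = _
  rw [if_neg h1, if_neg h2]

lemma sigmaAct_at0 : sigmaAct i v ⟨(i : ℕ), fin_lt0 i⟩ = v ⟨(i : ℕ) + 1, fin_lt1 i⟩ := by
  show (if ((i:ℕ) = (i:ℕ)) then _ else _) = _
  rw [if_pos rfl]

lemma sigmaAct_at1 : sigmaAct i v ⟨(i : ℕ) + 1, fin_lt1 i⟩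
    = 2 * v ⟨(i : ℕ) + 1, fin_lt1 i⟩ - v ⟨(i : ℕ), fin_lt0 i⟩ := by
  show (if ((i:ℕ) + 1 = (i:ℕ)) then _ else if ((i:ℕ) + 1 = (i:ℕ) + 1) then _ else _) = _
  rw [if_neg (by omega), if_pos rfl]

lemma sigmaAct_other (t : Fin m) (h1 : (t:ℕ) ≠ (i:ℕ)) (h2 : (t:ℕ) ≠ (i:ℕ) + 1) :
    sigmaAct i v t = v t := by
  show (if _ then _ else if _ then _ else _) = _
  rw [if_neg h1, if_neg h2]

lemma sigmaInvAct_at0 : sigmaInvAct i v ⟨(i : ℕ), fin_lt0 i⟩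
    = 2 * v ⟨(i : ℕ), fin_lt0 i⟩ - v ⟨(i : ℕ) + 1, fin_lt1 i⟩ := by
  show (if ((i:ℕ) = (i:ℕ)) then _ else _) = _
  rw [if_pos rfl]

lemma sigmaInvAct_at1 : sigmaInvAct i v ⟨(i : ℕ) + 1, fin_lt1 i⟩ = v ⟨(i : ℕ), fin_lt0 i⟩ := by
  show (if ((i:ℕ) + 1 = (i:ℕ)) then _ else if ((i:ℕ) + 1 = (i:ℕ) + 1) then _ else _) = _
  rw [if_neg (by omega), if_pos rfl]

lemma sigmaInvAct_other (t : Fin m) (h1 : (t:ℕ) ≠ (i:ℕ)) (h2 : (t:ℕ) ≠ (i:ℕ) + 1) :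
    sigmaInvAct i v t = v t := by
  show (if _ then _ else if _ then _ else _) = _
  rw [if_neg h1, if_neg h2]

end atLemmas

lemma act_sigma_tau (i : Fin (m - 1)) (v : Fin m → ℤ) :
    tauAct i (sigmaAct i v) =
      refMap (⟨(i : ℕ), fin_lt0 i⟩ : Fin m) (⟨(i : ℕ) + 1, fin_lt1 i⟩ : Fin m) v := by
  funext t
  rw [refMap_apply]
  by_cases h1 : (t : ℕ) = (i : ℕ)
  · have ht : t = (⟨(i : ℕ), fin_lt0 i⟩ : Fin m) := Fin.ext h1
    rw [if_pos ht, ht, tauAct_at0, sigmaAct_at1]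
  · have ht : t ≠ (⟨(i : ℕ), fin_lt0 i⟩ : Fin m) := fun hh => h1 (congrArg Fin.val hh)
    rw [if_neg ht]
    by_cases h2 : (t : ℕ) = (i : ℕ) + 1
    · have ht2 : t = (⟨(i : ℕ) + 1, fin_lt1 i⟩ : Fin m) := Fin.ext h2
      rw [ht2, tauAct_at1, sigmaAct_at0]
    · rw [tauAct_other i _ t h1 h2, sigmaAct_other i v t h1 h2]

lemma act_sigmaInv_tau (i : Fin (m - 1)) (v : Fin m → ℤ) :
    tauAct i (sigmaInvAct i v) =
      refMap (⟨(i : ℕ) + 1, fin_lt1 i⟩ : Fin m) (⟨(i : ℕ), fin_lt0 i⟩ : Fin m) v := by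
  funext t
  rw [refMap_apply]
  by_cases h2 : (t : ℕ) = (i : ℕ) + 1
  · have ht : t = (⟨(i : ℕ) + 1, fin_lt1 i⟩ : Fin m) := Fin.ext h2
    rw [if_pos ht, ht, tauAct_at1, sigmaInvAct_at0]
  · have ht : t ≠ (⟨(i : ℕ) + 1, fin_lt1 i⟩ : Fin m) := fun hh => h2 (congrArg Fin.val hh)
    rw [if_neg ht]
    by_cases h1 : (t : ℕ) = (i : ℕ)
    · have ht1 : t = (⟨(i : ℕ), fin_lt0 i⟩ : Fin m) := Fin.ext h1
      rw [ht1, tauAct_at0, sigmaInvAct_at1]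
    · rw [tauAct_other i _ t h1 h2, sigmaInvAct_other i v t h1 h2]

lemma letterPerm_sq (i : Fin (m - 1)) : letterPerm (m := m) i * letterPerm i = 1 := by
  simp [letterPerm, Equiv.swap_mul_self]

lemma tauAct_eq_swap (i : Fin (m - 1)) (v : Fin m → ℤ) :
    tauAct i v = fun t => v (Equiv.swap (⟨(i : ℕ), fin_lt0 i⟩ : Fin m)
      ⟨(i : ℕ) + 1, fin_lt1 i⟩ t) := by
  funext t
  by_cases h1 : (t : ℕ) = (i : ℕ)
  · have ht : t = (⟨(i : ℕ), fin_lt0 i⟩ : Fin m) := Fin.ext h1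
    rw [ht, tauAct_at0, Equiv.swap_apply_left]
  · by_cases h2 : (t : ℕ) = (i : ℕ) + 1
    · have ht : t = (⟨(i : ℕ) + 1, fin_lt1 i⟩ : Fin m) := Fin.ext h2
      rw [ht, tauAct_at1, Equiv.swap_apply_right]
    · rw [tauAct_other i v t h1 h2,
        Equiv.swap_apply_of_ne_of_ne (fun hh => h1 (congrArg Fin.val hh))
          (fun hh => h2 (congrArg Fin.val hh))]

/-- conjugation of a pure word by a τ-letter -/
lemma conj_tau {k : Fin (m - 1)} {f : (Fin m → ℤ) → (Fin m → ℤ)}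
    {β : List (VBraidLetter m)}
    (ha : ∀ v, vwordAct β v = f v) (hp : vwordPerm β = 1) :
    ∃ γ : List (VBraidLetter m),
      (∀ v, vwordAct γ v = tauAct k (f (tauAct k v))) ∧ vwordPerm γ = 1 := by
  refine ⟨(k, none) :: (β ++ [(k, none)]), fun v => ?_, ?_⟩
  · show vwordAct (β ++ [(k,none)]) (vletterAct (k,none) v) = _
    rw [vwordAct_append, ha]
    rfl
  · rw [vwordPerm_cons, vwordPerm_append, hp, mul_one]
    show (letterPerm k * 1) * letterPerm k = 1
    rw [mul_one, letterPerm_sq]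

lemma swap_refMap (a b i j : Fin m) (v : Fin m → ℤ) :
    (fun t => (refMap i j (fun s => v (Equiv.swap a b s))) (Equiv.swap a b t))
      = refMap (Equiv.swap a b i) (Equiv.swap a b j) v := by
  funext t
  simp only [refMap_apply]
  have hsw : Equiv.swap a b t = i ↔ t = Equiv.swap a b i := by
    constructor
    · intro h; rw [← h, Equiv.swap_apply_self]
    · intro h; rw [h, Equiv.swap_apply_self]
  by_cases h : t = Equiv.swap a b i
  · rw [if_pos (hsw.2 h), if_pos h]
  · rw [if_neg (fun hh => h (hsw.1 hh)), if_neg h, Equiv.swap_apply_self]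

/-- Every reflection is realized by a pure virtual braid word. -/
lemma exists_refWord : ∀ (i j : Fin m), i ≠ j →
    ∃ β : List (VBraidLetter m), (∀ v, vwordAct β v = refMap i j v) ∧ vwordPerm β = 1 := by
  suffices H : ∀ n : ℕ, ∀ i j : Fin m, i ≠ j → Nat.dist (i : ℕ) (j : ℕ) ≤ n →
      ∃ β : List (VBraidLetter m), (∀ v, vwordAct β v = refMap i j v) ∧ vwordPerm β = 1 by
    intro i j hij
    exact H (Nat.dist i j) i j hij le_rfl
  intro n
  induction n with
  | zero =>
      intro i j hij hd
      exact absurd (Fin.ext (Nat.eq_of_dist_eq_zero (Nat.le_zero.1 hd))) hij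
  | succ n ih =>
      intro i j hij hd
      have hvalne : (i : ℕ) ≠ (j : ℕ) := fun h => hij (Fin.ext h)
      rcases Nat.lt_or_ge (Nat.dist (i : ℕ) (j : ℕ)) (n + 1) with hlt | hge
      · exact ih i j hij (Nat.lt_succ_iff.1 hlt)
      have hdist : Nat.dist (i : ℕ) (j : ℕ) = n + 1 := le_antisymm hd hge
      simp only [Nat.dist] at hdist
      rcases Nat.lt_or_ge (i : ℕ) (j : ℕ) with hij' | hji'
      · -- i < j
        rcases Nat.lt_or_ge ((i : ℕ) + 1) (j : ℕ) with hfar | hnear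
        · -- j ≥ i + 2
          have hjm : (j : ℕ) - 1 < m - 1 := by have := j.isLt; omega
          set k : Fin (m - 1) := ⟨(j : ℕ) - 1, hjm⟩ with hk
          have hj1 : ((k : ℕ)) = (j : ℕ) - 1 := rfl
          set j' : Fin m := (⟨(k : ℕ), fin_lt0 k⟩ : Fin m) with hj'
          have hij2 : i ≠ j' := by
            intro h
            have := congrArg Fin.val h
            rw [hj'] at this
            simp only [hj1] at this
            omega
          have hd2 : Nat.dist (i : ℕ) (j' : ℕ) ≤ n := by
            have hv : (j' : ℕ) = (j : ℕ) - 1 := rfl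
            simp only [Nat.dist, hv]
            omega
          obtain ⟨β, hβa, hβp⟩ := ih i j' hij2 hd2
          obtain ⟨γ, hγa, hγp⟩ := conj_tau (k := k) hβa hβp
          refine ⟨γ, fun v => ?_, hγp⟩
          rw [hγa v, tauAct_eq_swap k, tauAct_eq_swap k]
          set a : Fin m := (⟨(k : ℕ), fin_lt0 k⟩ : Fin m) with hA
          set b : Fin m := (⟨(k : ℕ) + 1, fin_lt1 k⟩ : Fin m) with hB
          have e1 := swap_refMap a b i j' v
          have hswi : Equiv.swap a b i = i := by
            apply Equiv.swap_apply_of_ne_of_ne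
            · intro h; have := congrArg Fin.val h; rw [hA] at this
              simp only [hj1] at this; omega
            · intro h; have := congrArg Fin.val h; rw [hB] at this
              simp only [hj1] at this; omega
          have hswj : Equiv.swap a b j' = j := by
            have : j' = a := rfl
            rw [this, Equiv.swap_apply_left, hB]
            apply Fin.ext
            show (k : ℕ) + 1 = (j : ℕ)
            rw [hj1]; omega
          rw [e1, hswi, hswj]
        · -- j = i + 1
          have hbase : (j : ℕ) = (i : ℕ) + 1 := by omega
          have him : (i : ℕ) < m - 1 := by have := j.isLt; omega
          set k : Fin (m - 1) := ⟨(i : ℕ), him⟩ with hk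
          have e0 : (⟨(k : ℕ), fin_lt0 k⟩ : Fin m) = i := Fin.ext rfl
          have e1 : (⟨(k : ℕ) + 1, fin_lt1 k⟩ : Fin m) = j := by
            apply Fin.ext; show (k : ℕ) + 1 = (j : ℕ); rw [hbase]
          refine ⟨[(k, some true), (k, none)], fun v => ?_, ?_⟩
          · show tauAct k (sigmaAct k v) = refMap i j v
            rw [act_sigma_tau k v, e0, e1]
          · rw [vwordPerm_cons, vwordPerm_cons]
            show 1 * letterPerm k * letterPerm k = 1
            rw [one_mul, letterPerm_sq]
      · -- j < i
        have hji : (j : ℕ) < (i : ℕ) := by omega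
        rcases Nat.lt_or_ge ((j : ℕ) + 1) (i : ℕ) with hfar | hnear
        · -- i ≥ j + 2
          have him : (i : ℕ) - 1 < m - 1 := by have := i.isLt; omega
          set k : Fin (m - 1) := ⟨(i : ℕ) - 1, him⟩ with hk
          have hi1 : ((k : ℕ)) = (i : ℕ) - 1 := rfl
          set i' : Fin m := (⟨(k : ℕ), fin_lt0 k⟩ : Fin m) with hi'
          have hij2 : i' ≠ j := by
            intro h
            have := congrArg Fin.val h
            rw [hi'] at this
            simp only [hi1] at this
            omega
          have hd2 : Nat.dist (i' : ℕ) (j : ℕ) ≤ n := by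
            have hv : (i' : ℕ) = (i : ℕ) - 1 := rfl
            simp only [Nat.dist, hv]
            omega
          obtain ⟨β, hβa, hβp⟩ := ih i' j hij2 hd2
          obtain ⟨γ, hγa, hγp⟩ := conj_tau (k := k) hβa hβp
          refine ⟨γ, fun v => ?_, hγp⟩
          rw [hγa v, tauAct_eq_swap k, tauAct_eq_swap k]
          set a : Fin m := (⟨(k : ℕ), fin_lt0 k⟩ : Fin m) with hA
          set b : Fin m := (⟨(k : ℕ) + 1, fin_lt1 k⟩ : Fin m) with hB
          have e1 := swap_refMap a b i' j v
          have hswi : Equiv.swap a b i' = i := by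
            have : i' = a := rfl
            rw [this, Equiv.swap_apply_left, hB]
            apply Fin.ext
            show (k : ℕ) + 1 = (i : ℕ)
            rw [hi1]; omega
          have hswj : Equiv.swap a b j = j := by
            apply Equiv.swap_apply_of_ne_of_ne
            · intro h; have := congrArg Fin.val h; rw [hA] at this
              simp only [hi1] at this; omega
            · intro h; have := congrArg Fin.val h; rw [hB] at this
              simp only [hi1] at this; omega
          rw [e1, hswi, hswj]
        · -- i = j + 1
          have hbase : (i : ℕ) = (j : ℕ) + 1 := by omega
          have hjm : (j : ℕ) < m - 1 := by have := i.isLt; omega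
          set k : Fin (m - 1) := ⟨(j : ℕ), hjm⟩ with hk
          have e0 : (⟨(k : ℕ), fin_lt0 k⟩ : Fin m) = j := Fin.ext rfl
          have e1 : (⟨(k : ℕ) + 1, fin_lt1 k⟩ : Fin m) = i := by
            apply Fin.ext; show (k : ℕ) + 1 = (i : ℕ); rw [hbase]
          refine ⟨[(k, some false), (k, none)], fun v => ?_, ?_⟩
          · show tauAct k (sigmaInvAct k v) = refMap i j v
            rw [act_sigmaInv_tau k v, e0, e1]
          · rw [vwordPerm_cons, vwordPerm_cons]
            show 1 * letterPerm k * letterPerm k = 1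
            rw [one_mul, letterPerm_sq]

-- ===== Part 2 : reflection model =====

def StepR (v w : Fin m → ℤ) : Prop := ∃ i j : Fin m, i ≠ j ∧ w = refMap i j v

def RelR : (Fin m → ℤ) → (Fin m → ℤ) → Prop := Relation.ReflTransGen StepR

lemma StepR.symm' {v w : Fin m → ℤ} (h : StepR v w) : StepR w v := by
  obtain ⟨i, j, hij, rfl⟩ := h
  exact ⟨i, j, hij, (refMap_involutive hij v).symm⟩

lemma RelR.symm' {v w : Fin m → ℤ} (h : RelR v w) : RelR w v :=
  by haveI : Std.Symm (StepR (m := m)) := ⟨fun _ _ hh => StepR.symm' hh⟩; exact Std.Symm.symm (r := Relation.ReflTransGen StepR) _ _ h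

lemma stepR_pure {v w : Fin m → ℤ} (h : StepR v w) : VPureEquiv v w := by
  obtain ⟨i, j, hij, rfl⟩ := h
  obtain ⟨β, hβa, hβp⟩ := exists_refWord i j hij
  exact ⟨β, hβa v, hβp⟩

lemma relR_pure {v w : Fin m → ℤ} (h : RelR v w) : VPureEquiv v w := by
  induction h with
  | refl => exact VPureEquiv.refl' v
  | tail _ hstep ih => exact VPureEquiv.trans' ih (stepR_pure hstep)

-- gcd basics
lemma dgcd_dvd (v : Fin m → ℤ) (i j : Fin m) : dgcd v ∣ v i - v j :=
  Finset.gcd_dvd (Finset.mem_univ ((i, j) : Fin m × Fin m))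

lemma dvd_dgcd {v : Fin m → ℤ} {c : ℤ} (h : ∀ i j, c ∣ v i - v j) : c ∣ dgcd v :=
  Finset.dvd_gcd (fun p _ => h p.1 p.2)

lemma dgcd_nonneg (v : Fin m → ℤ) : 0 ≤ dgcd v := by
  have h := Finset.normalize_gcd (s := (Finset.univ : Finset (Fin m × Fin m)))
    (f := fun p : Fin m × Fin m => v p.1 - v p.2)
  have h2 := Int.abs_eq_normalize (dgcd v)
  rw [show (dgcd v) = Finset.univ.gcd (fun p : Fin m × Fin m => v p.1 - v p.2) from rfl] at h2 ⊢
  rw [h] at h2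
  rw [← h2]
  exact abs_nonneg _

lemma dgcd_dvd_refMap (v : Fin m → ℤ) (i j : Fin m) : dgcd v ∣ dgcd (refMap i j v) := by
  apply dvd_dgcd
  intro a b
  have hd := dgcd_dvd v
  rw [refMap_apply, refMap_apply]
  by_cases ha : a = i <;> by_cases hb : b = i
  · rw [if_pos ha, if_pos hb, sub_self]
    exact dvd_zero _
  · rw [if_pos ha, if_neg hb]
    have : 2 * v j - v i - v b = 2 * (v j - v b) - (v i - v b) := by ring
    rw [this]
    exact dvd_sub (Dvd.dvd.mul_left (hd j b) 2) (hd i b)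
  · rw [if_neg ha, if_pos hb]
    have : v a - (2 * v j - v i) = (v a - v i) - 2 * (v j - v i) := by ring
    rw [this]
    exact dvd_sub (hd a i) (Dvd.dvd.mul_left (hd j i) 2)
  · rw [if_neg ha, if_neg hb]
    exact hd a b

lemma stepR_dgcd {v w : Fin m → ℤ} (h : StepR v w) : dgcd w = dgcd v := by
  obtain ⟨i, j, hij, rfl⟩ := h
  refine Int.dvd_antisymm (dgcd_nonneg _) (dgcd_nonneg _) ?_ (dgcd_dvd_refMap v i j)
  have h2 := dgcd_dvd_refMap (refMap i j v) i j
  rwa [refMap_involutive hij v] at h2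

lemma relR_dgcd {v w : Fin m → ℤ} (h : RelR v w) : dgcd w = dgcd v := by
  induction h with
  | refl => rfl
  | tail _ hstep ih => rw [stepR_dgcd hstep, ih]

-- Delta of an update
lemma delta_update (v : Fin m → ℤ) (i : Fin m) (x : ℤ) :
    Delta (Function.update v i x) = Delta v + (-1 : ℤ) ^ (i : ℕ) * (x - v i) := by
  unfold Delta
  have h : ∀ j : Fin m, (-1 : ℤ) ^ (j : ℕ) * Function.update v i x j
      = (-1 : ℤ) ^ (j : ℕ) * v j + (if j = i then (-1 : ℤ) ^ (j : ℕ) * (x - v i) else 0) := by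
    intro j
    rw [Function.update_apply]
    by_cases h : j = i
    · subst h; rw [if_pos rfl, if_pos rfl]; ring
    · rw [if_neg h, if_neg h]; ring
  rw [Finset.sum_congr rfl (fun j _ => h j), Finset.sum_add_distrib,
    Finset.sum_ite_eq' Finset.univ i]
  simp

lemma relR_delta {v w : Fin m → ℤ} (h : RelR v w) : 2 * dgcd v ∣ Delta w - Delta v := by
  induction h with
  | refl => simp
  | @tail b c hab hstep ih =>
      have hb : dgcd b = dgcd v := relR_dgcd hab
      obtain ⟨i, j, hij, rfl⟩ := hstep
      have : Delta (refMap i j b) - Delta b = (-1 : ℤ) ^ (i : ℕ) * 2 * (b j - b i) := by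
        rw [show refMap i j b = Function.update b i (2 * b j - b i) from rfl, delta_update]
        ring
      have hdvd : 2 * dgcd v ∣ Delta (refMap i j b) - Delta b := by
        rw [this]
        have := dgcd_dvd b j i
        rw [hb] at this
        obtain ⟨c, hc⟩ := this
        exact ⟨(-1 : ℤ) ^ (i : ℕ) * c, by rw [hc]; ring⟩
      have := dvd_add hdvd ih
      simpa using this

-- pump
lemma pump_step (v : Fin m → ℤ) (i j k : Fin m) (hki : k ≠ i) (hkj : k ≠ j) :
    RelR v (Function.update v k (v k + 2 * (v j - v i))) := by
  have h1 : StepR v (refMap k i v) := ⟨k, i, hki, rfl⟩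
  have h2 : StepR (refMap k i v) (refMap k j (refMap k i v)) := ⟨k, j, hkj, rfl⟩
  have he : refMap k j (refMap k i v) = Function.update v k (v k + 2 * (v j - v i)) := by
    funext t
    rw [refMap_apply, Function.update_apply]
    by_cases ht : t = k
    · rw [if_pos ht, if_pos ht]
      rw [refMap_apply, if_neg (fun hh : j = k => hkj hh.symm),
        refMap_apply, if_pos rfl]
      ring
    · rw [if_neg ht, if_neg ht, refMap_apply, if_neg ht]
  exact Relation.ReflTransGen.tail (Relation.ReflTransGen.single h1) (he ▸ h2)

lemma pump_nat (v : Fin m → ℤ) (i j k : Fin m) (hki : k ≠ i) (hkj : k ≠ j) (N : ℕ) :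
    RelR v (Function.update v k (v k + 2 * (N : ℤ) * (v j - v i))) := by
  induction N with
  | zero => simpa [RelR] using (Relation.ReflTransGen.refl : RelR v v)
  | succ N ih =>
      set w := Function.update v k (v k + 2 * (N : ℤ) * (v j - v i)) with hw
      have hwj : w j = v j := Function.update_of_ne (fun hh : j = k => hkj hh.symm) _ v
      have hwi : w i = v i := Function.update_of_ne (fun hh : i = k => hki hh.symm) _ v
      have hwk : w k = v k + 2 * (N : ℤ) * (v j - v i) := Function.update_self _ _ _
      have hstep := pump_step w i j k hki hkj
      rw [hwj, hwi, hwk, hw, Function.update_idem] at hstep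
      have : v k + 2 * (N : ℤ) * (v j - v i) + 2 * (v j - v i)
          = v k + 2 * ((N : ℤ) + 1) * (v j - v i) := by ring
      rw [this] at hstep
      have := Relation.ReflTransGen.trans ih hstep
      simpa [Nat.cast_succ, RelR] using this

lemma pump_int (v : Fin m → ℤ) (i j k : Fin m) (hki : k ≠ i) (hkj : k ≠ j) (t : ℤ) :
    RelR v (Function.update v k (v k + 2 * t * (v j - v i))) := by
  rcases le_or_gt 0 t with ht | ht
  · obtain ⟨N, rfl⟩ := Int.eq_ofNat_of_zero_le ht
    exact pump_nat v i j k hki hkj N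
  · have hN : t = -((-t).toNat : ℤ) := by omega
    have := pump_nat v j i k hkj hki (-t).toNat
    have he : v k + 2 * ((-t).toNat : ℤ) * (v i - v j) = v k + 2 * t * (v j - v i) := by
      rw [show ((-t).toNat : ℤ) = -t by omega]; ring
    rwa [he] at this

-- ===== Part 3 : Euclid =====

/-- smallest positive |difference| -/
noncomputable def mu (v : Fin m → ℤ) : ℕ :=
  sInf {N : ℕ | 0 < N ∧ ∃ i j : Fin m, (v j - v i).natAbs = N}

lemma mu_set_nonempty {v : Fin m → ℤ} (hv : dgcd v ≠ 0) :
    {N : ℕ | 0 < N ∧ ∃ i j : Fin m, (v j - v i).natAbs = N}.Nonempty := by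
  have hpair : ∃ i j : Fin m, v j ≠ v i := by
    by_contra hall
    push_neg at hall
    apply hv
    have : ∀ p ∈ (Finset.univ : Finset (Fin m × Fin m)),
        (fun p : Fin m × Fin m => v p.1 - v p.2) p = 0 := by
      intro p _
      simp only
      rw [hall p.1 p.2, sub_self]
    exact Finset.gcd_eq_zero_iff.2 this
  obtain ⟨i, j, hij⟩ := hpair
  exact ⟨(v j - v i).natAbs, Int.natAbs_pos.2 (sub_ne_zero.2 hij), i, j, rfl⟩

lemma mu_mem {v : Fin m → ℤ} (hv : dgcd v ≠ 0) :
    0 < mu v ∧ ∃ i j : Fin m, (v j - v i).natAbs = mu v :=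
  Nat.sInf_mem (mu_set_nonempty hv)

lemma mu_le {v : Fin m → ℤ} (i j : Fin m) (h : v j ≠ v i) :
    mu v ≤ (v j - v i).natAbs :=
  Nat.sInf_le ⟨Int.natAbs_pos.2 (sub_ne_zero.2 h), i, j, rfl⟩

lemma euclid : ∀ N : ℕ, ∀ v : Fin m → ℤ, 0 < dgcd v → mu v ≤ N →
    ∃ w : Fin m → ℤ, RelR v w ∧ ∃ i j : Fin m, w j - w i = dgcd v := by
  intro N
  induction N with
  | zero =>
      intro v hv hle
      exact absurd hle (by have := (mu_mem hv.ne').1; omega)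
  | succ N ih =>
      intro v hv hle
      obtain ⟨hmupos, i, j, hij⟩ := mu_mem hv.ne'
      have hd_dvd_mu : dgcd v ∣ (mu v : ℤ) := by
        rw [← hij]
        exact (Int.dvd_natAbs).2 (dgcd_dvd v j i)
      have hd_le_mu : dgcd v ≤ (mu v : ℤ) :=
        Int.le_of_dvd (by exact_mod_cast hmupos) hd_dvd_mu
      by_cases hcase : (mu v : ℤ) = dgcd v
      · rcases Int.natAbs_eq (v j - v i) with he | he
        · exact ⟨v, Relation.ReflTransGen.refl, i, j, by rw [he, hij, hcase]⟩
        · refine ⟨v, Relation.ReflTransGen.refl, j, i, ?_⟩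
          have : v i - v j = ((v j - v i).natAbs : ℤ) := by omega
          rw [this, hij, hcase]
      · -- mu v > d ; find a pair not divisible by mu
        have hmu_gt : dgcd v < (mu v : ℤ) := lt_of_le_of_ne hd_le_mu (Ne.symm hcase)
        have hbad : ∃ k l : Fin m, ¬ ((mu v : ℤ) ∣ v l - v k) := by
          by_contra hall
          push_neg at hall
          have h1 : (mu v : ℤ) ∣ dgcd v := dvd_dgcd (fun a b => hall b a)
          have h2 : (mu v : ℤ) ≤ dgcd v := Int.le_of_dvd hv h1
          omega
        obtain ⟨k, l, hkl⟩ := hbad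
        have hmu_dvd_e : (mu v : ℤ) ∣ v j - v i := by
          rcases Int.natAbs_eq (v j - v i) with he | he
          · rw [he, hij]
          · rw [show v j - v i = -(((v j - v i).natAbs : ℤ)) by omega, hij]
            exact dvd_neg.2 dvd_rfl
        obtain ⟨k', l', hk'i, hk'j, hbad'⟩ :
            ∃ k' l' : Fin m, k' ≠ i ∧ k' ≠ j ∧ ¬ ((mu v : ℤ) ∣ v l' - v k') := by
          by_cases hki : k = i ∨ k = j
          · -- then l ∉ {i,j}
            have hli : l ≠ i ∧ l ≠ j := by
              constructor
              · intro hh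
                apply hkl
                rcases hki with h2 | h2
                · rw [hh, h2, sub_self]; exact dvd_zero _
                · rw [hh, h2]
                  have := dvd_neg.2 hmu_dvd_e
                  rwa [neg_sub] at this
              · intro hh
                apply hkl
                rcases hki with h2 | h2
                · rw [hh, h2]
                  exact hmu_dvd_e
                · rw [hh, h2, sub_self]; exact dvd_zero _
            refine ⟨l, k, hli.1, hli.2, fun hdd => hkl ?_⟩
            have := dvd_neg.2 hdd
            rwa [neg_sub] at this
          · push_neg at hki
            exact ⟨k, l, hki.1, hki.2, hkl⟩
        -- reduce the difference D := v l' - v k' modulo 2 * mu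
        set M : ℤ := (mu v : ℤ) with hM
        set D : ℤ := v l' - v k' with hD
        have hMpos : 0 < M := by rw [hM]; exact_mod_cast hmupos
        have h2M : 0 < 2 * M := by omega
        set r0 : ℤ := D % (2 * M) with hr0
        have hr0nonneg : 0 ≤ r0 := Int.emod_nonneg D (by omega)
        have hr0lt : r0 < 2 * M := Int.emod_lt_of_pos D h2M
        have hdvd_diff : 2 * M ∣ D - r0 := Int.dvd_self_sub_of_emod_eq rfl
        have hr0ne0 : r0 ≠ 0 := by
          intro hh
          apply hbad'
          have : 2 * M ∣ D := by rw [← sub_zero D, ← hh]; exact hdvd_diff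
          exact dvd_trans ⟨2, by ring⟩ this
        have hr0neM : r0 ≠ M := by
          intro hh
          apply hbad'
          obtain ⟨c, hc⟩ := hdvd_diff
          have : D = M * (2 * c + 1) := by rw [← hh] at hc ⊢; linarith
          exact ⟨2 * c + 1, this⟩
        set r : ℤ := if r0 < M then r0 else r0 - 2 * M with hr
        have hrne0 : r ≠ 0 := by
          rw [hr]; split_ifs with hh
          · exact hr0ne0
          · intro h2; omega
        have hrabs : r.natAbs < mu v := by
          have h3 : -M < r ∧ r < M := by
            rw [hr]; split_ifs with hh
            · omega
            · constructor
              · rcases lt_or_eq_of_le (not_lt.1 hh) with h2 | h2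
                · omega
                · exfalso; exact hr0neM h2.symm
              · omega
          omega
        have hdvd_Dr : 2 * M ∣ D - r := by
          rw [hr]; split_ifs with hh
          · exact hdvd_diff
          · have : D - (r0 - 2 * M) = (D - r0) + 2 * M := by ring
            rw [this]
            exact dvd_add hdvd_diff ⟨1, by ring⟩
        -- choose t with 2 * t * (v j - v i) = D - r
        obtain ⟨c, hc⟩ := hdvd_Dr
        have he_or : v j - v i = M ∨ v j - v i = -M := by
          rcases Int.natAbs_eq (v j - v i) with he | he
          · left; rw [he, hij]
          · right; rw [he, hij]
        set t : ℤ := if v j - v i = M then c else -c with ht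
        have ht_eq : 2 * t * (v j - v i) = D - r := by
          rw [ht]; split_ifs with hh
          · rw [hh, hc]; ring
          · have : v j - v i = -M := by
              rcases he_or with h2 | h2
              · exact absurd h2 hh
              · exact h2
            rw [this, hc]; ring
        -- the new vector
        set w : Fin m → ℤ := Function.update v k' (v k' + 2 * t * (v j - v i)) with hw
        have hrel : RelR v w := pump_int v i j k' hk'i hk'j t
        have hl'k' : l' ≠ k' := by
          intro hh
          apply hbad'
          rw [hD, hh, sub_self]
          exact dvd_zero _
        have hwl' : w l' = v l' := Function.update_of_ne hl'k' _ v
        have hwk' : w k' = v k' + 2 * t * (v j - v i) := Function.update_self _ _ _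
        have hwdiff : w l' - w k' = r := by
          rw [hwl', hwk', ht_eq, hD]; ring
        have hdw : dgcd w = dgcd v := relR_dgcd hrel
        have hmuw : mu w ≤ N := by
          have hne2 : w l' ≠ w k' := by
            have h4 : w l' - w k' ≠ 0 := by rw [hwdiff]; exact hrne0
            exact sub_ne_zero.1 h4
          have h1 : mu w ≤ (w l' - w k').natAbs := mu_le k' l' hne2
          rw [hwdiff] at h1
          omega
        obtain ⟨w2, hrel2, i2, j2, hw2⟩ := ih w (by rw [hdw]; exact hv) hmuw
        exact ⟨w2, Relation.ReflTransGen.trans hrel hrel2, i2, j2, by rw [hw2, hdw]⟩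

-- ===== Part 4 : final assembly =====

lemma exists_third (hm : 3 ≤ m) (i j : Fin m) : ∃ k : Fin m, k ≠ i ∧ k ≠ j := by
  by_contra hall
  push_neg at hall
  have hsub : (Finset.univ : Finset (Fin m)) ⊆ {i, j} := by
    intro k _
    rcases eq_or_ne k i with h | h
    · simp [h]
    · simp [hall k h]
  have h1 : (Finset.univ : Finset (Fin m)).card ≤ ({i, j} : Finset (Fin m)).card :=
    Finset.card_le_card hsub
  have h2 : ({i, j} : Finset (Fin m)).card ≤ 2 :=
    le_trans (Finset.card_insert_le _ _) (by simp)
  rw [Finset.card_univ, Fintype.card_fin] at h1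
  omega


end Stmt17Aux

/-- for nontrivial `v ∈ ℤ^m` (`m ≥ 3`) and any integer `n`, there is
`v' ∼_{vP} v` with `Δ(v') = Δ(v) + 2n·d(v)`. -/
theorem stmt_17 (m : ℕ) (hm : 3 ≤ m) (v : Fin m → ℤ) (hv : 0 < dgcd v) (n : ℤ) :
    ∃ v' : Fin m → ℤ, VPureEquiv v' v ∧ Delta v' = Delta v + 2 * n * dgcd v := by
  obtain ⟨w, hrel, i, j, hwd⟩ := euclid (mu v) v hv le_rfl
  have hij : i ≠ j := by
    intro hh
    rw [hh, sub_self] at hwd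
    omega
  obtain ⟨k, hki, hkj⟩ := exists_third hm i j
  have hdw : dgcd w = dgcd v := relR_dgcd hrel
  obtain ⟨s, hs⟩ := relR_delta hrel
  set t : ℤ := if Even (k : ℕ) then n - s else s - n with ht
  set v' : Fin m → ℤ := Function.update w k (w k + 2 * t * (w j - w i)) with hv'
  have hrel2 : RelR w v' := pump_int w i j k hki hkj t
  have hdelta : Delta v' = Delta w + (-1 : ℤ) ^ (k : ℕ) * (2 * t * (w j - w i)) := by
    rw [hv', delta_update]
    ring
  have hsign : (-1 : ℤ) ^ (k : ℕ) * t = n - s := by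
    rcases Nat.even_or_odd (k : ℕ) with he | he
    · rw [he.neg_one_pow, ht, if_pos he]; ring
    · rw [he.neg_one_pow, ht, if_neg (Nat.not_even_iff_odd.2 he)]; ring
  refine ⟨v', relR_pure (RelR.symm' (Relation.ReflTransGen.trans hrel hrel2)), ?_⟩
  rw [hdelta, hwd]
  have : Delta w = Delta v + 2 * dgcd v * s := by omega
  rw [this]
  have : (-1 : ℤ) ^ (k : ℕ) * (2 * t * dgcd v) = 2 * (n - s) * dgcd v := by
    rw [show (-1 : ℤ) ^ (k : ℕ) * (2 * t * dgcd v) = ((-1 : ℤ) ^ (k : ℕ) * t) * (2 * dgcd v) by ring,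
      hsign]
    ring
  rw [this]
  ring
end

section
/- Let m ≥ 3 and let v = (a_1,…,a_m), w = (b_1,…,b_m) ∈ ℤ^m. Then: (i) v ∼_v w (virtual braid equivalence) if and only if d(v) = d(w) and M(v)_{2d(v)} = M(w)_{2d(w)}; (ii) v ∼_{vP} w (virtual-pure-braid equivalence) if and only if d(v) = d(w) and a_i ≡ b_i (mod 2d(v)) for every i = 1,…,m. (Congruence mod 0 means equality in ℤ.) -/
namespace Stmt18Aux

open Finset

variable {m : ℕ}

/-! ### dgcd basics -/

lemma dgcd_nonneg (v : Fin m → ℤ) : 0 ≤ dgcd v := by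
  have h := Finset.normalize_gcd (s := (Finset.univ : Finset (Fin m × Fin m)))
    (f := fun p : Fin m × Fin m => v p.1 - v p.2)
  exact Int.nonneg_of_normalize_eq_self h

lemma dgcd_dvd (v : Fin m → ℤ) (p q : Fin m) : dgcd v ∣ v p - v q :=
  Finset.gcd_dvd (Finset.mem_univ ((p, q) : Fin m × Fin m))

lemma dvd_dgcd {v : Fin m → ℤ} {D : ℤ} (h : ∀ p q : Fin m, D ∣ v p - v q) :
    D ∣ dgcd v :=
  Finset.dvd_gcd fun p _ => h p.1 p.2

lemma dgcd_eq_zero {v : Fin m → ℤ} (h : ∀ p q : Fin m, v p = v q) : dgcd v = 0 := by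
  unfold dgcd
  rw [Finset.gcd_eq_zero_iff]
  intro p _
  simp [h p.1 p.2]

lemma exists_ne_of_dgcd_ne_zero {v : Fin m → ℤ} (h : dgcd v ≠ 0) :
    ∃ p q : Fin m, v p ≠ v q := by
  by_contra hc
  push_neg at hc
  exact h (dgcd_eq_zero hc)

lemma dgcd_comp_perm (v : Fin m → ℤ) (e : Equiv.Perm (Fin m)) :
    dgcd (v ∘ e) = dgcd v := by
  have h1 : ∀ (v : Fin m → ℤ) (e : Equiv.Perm (Fin m)), dgcd v ∣ dgcd (v ∘ e) := by
    intro v e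
    exact dvd_dgcd fun p q => dgcd_dvd v (e p) (e q)
  have h2 := h1 v e
  have h3 := h1 (v ∘ e) e⁻¹
  have he : (v ∘ e) ∘ (e⁻¹ : Equiv.Perm (Fin m)) = v := by
    funext x; simp
  rw [he] at h3
  exact Int.dvd_antisymm (dgcd_nonneg _) (dgcd_nonneg _) h3 h2

/-! ### word basics -/

lemma vwordAct_nil (v : Fin m → ℤ) : vwordAct [] v = v := rfl

lemma vwordAct_cons (l : VBraidLetter m) (β : List (VBraidLetter m)) (v : Fin m → ℤ) :
    vwordAct (l :: β) v = vwordAct β (vletterAct l v) := rfl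

lemma vwordAct_append (β₁ β₂ : List (VBraidLetter m)) (v : Fin m → ℤ) :
    vwordAct (β₁ ++ β₂) v = vwordAct β₂ (vwordAct β₁ v) := by
  unfold vwordAct
  rw [List.foldl_append]

lemma permFoldl (β : List (VBraidLetter m)) (x : Equiv.Perm (Fin m)) :
    β.foldl (fun p l => letterPerm l.1 * p) x = vwordPerm β * x := by
  induction β generalizing x with
  | nil => simp [vwordPerm]
  | cons l β ih =>
      rw [List.foldl_cons, ih]
      show _ = (β.foldl (fun p l => letterPerm l.1 * p) (letterPerm l.1 * 1)) * x
      rw [ih]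
      group

lemma vwordPerm_nil : vwordPerm ([] : List (VBraidLetter m)) = 1 := rfl

lemma vwordPerm_cons (l : VBraidLetter m) (β : List (VBraidLetter m)) :
    vwordPerm (l :: β) = vwordPerm β * letterPerm l.1 := by
  show List.foldl _ (letterPerm l.1 * 1) β = _
  rw [permFoldl, mul_one]

lemma vwordPerm_append (β₁ β₂ : List (VBraidLetter m)) :
    vwordPerm (β₁ ++ β₂) = vwordPerm β₂ * vwordPerm β₁ := by
  unfold vwordPerm
  rw [List.foldl_append]
  rw [show List.foldl (fun p l => letterPerm l.1 * p) 1 β₁ = vwordPerm β₁ from rfl]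
  exact permFoldl β₂ _

end Stmt18Aux

/-! ### per-letter lemmas -/

namespace Stmt18Aux

variable {m : ℕ}

lemma tau_tau (i : Fin (m - 1)) (v : Fin m → ℤ) : tauAct i (tauAct i v) = v := by
  have hi : (i : ℕ) < m - 1 := i.isLt
  funext j
  rcases j with ⟨jv, hj⟩
  simp only [tauAct]
  by_cases h1 : jv = (i : ℕ)
  · subst h1
    simp
  · by_cases h2 : jv = (i : ℕ) + 1
    · subst h2
      simp [h1]
    · simp [h1, h2]

lemma sigmaInv_sigma (i : Fin (m - 1)) (v : Fin m → ℤ) :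
    sigmaInvAct i (sigmaAct i v) = v := by
  have hi : (i : ℕ) < m - 1 := i.isLt
  funext j
  rcases j with ⟨jv, hj⟩
  simp only [sigmaAct, sigmaInvAct]
  by_cases h1 : jv = (i : ℕ)
  · subst h1
    simp
  · by_cases h2 : jv = (i : ℕ) + 1
    · subst h2
      simp [h1]
    · simp [h1, h2]

lemma sigma_sigmaInv (i : Fin (m - 1)) (v : Fin m → ℤ) :
    sigmaAct i (sigmaInvAct i v) = v := by
  have hi : (i : ℕ) < m - 1 := i.isLt
  funext j
  rcases j with ⟨jv, hj⟩
  simp only [sigmaAct, sigmaInvAct]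
  by_cases h1 : jv = (i : ℕ)
  · subst h1
    simp
  · by_cases h2 : jv = (i : ℕ) + 1
    · subst h2
      simp [h1]
    · simp [h1, h2]

/-- the inverse letter -/
def invLetter (l : VBraidLetter m) : VBraidLetter m := (l.1, l.2.map not)

lemma invLetter_act (l : VBraidLetter m) (v : Fin m → ℤ) :
    vletterAct (invLetter l) (vletterAct l v) = v := by
  obtain ⟨i, o⟩ := l
  match o with
  | none => exact tau_tau i v
  | some true => exact sigmaInv_sigma i v
  | some false => exact sigma_sigmaInv i v

lemma modEq_reflect {n x y : ℤ} (h : n ∣ x - y) : 2 * x - y ≡ y [ZMOD 2 * n] := by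
  rw [Int.modEq_iff_dvd]
  have : y - (2 * x - y) = 2 * -(x - y) := by ring
  rw [this]
  exact mul_dvd_mul_left 2 h.neg_right

lemma letter_cong (l : VBraidLetter m) (v : Fin m → ℤ) (j : Fin m) :
    vletterAct l v j ≡ v (letterPerm l.1 j) [ZMOD 2 * dgcd v] := by
  obtain ⟨i, o⟩ := l
  have hi : (i : ℕ) < m - 1 := i.isLt
  set a : Fin m := ⟨(i : ℕ), by omega⟩ with ha
  set b : Fin m := ⟨(i : ℕ) + 1, by omega⟩ with hb
  have hab : a ≠ b := by
    simp [ha, hb, Fin.ext_iff]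
  have hperm : letterPerm (m := m) i = Equiv.swap a b := rfl
  rcases eq_or_ne j a with rfl | hja
  · rw [hperm, Equiv.swap_apply_left]
    have t1 : tauAct i v a = v b := by
      simp only [tauAct, ha, hb]; simp
    have t2 : sigmaAct i v a = v b := by
      simp only [sigmaAct, ha, hb]; simp
    have t3 : sigmaInvAct i v a = 2 * v a - v b := by
      simp only [sigmaInvAct, ha, hb]; simp
    match o with
    | none =>
        show tauAct i v a ≡ _ [ZMOD _]
        rw [t1]
    | some true =>
        show sigmaAct i v a ≡ _ [ZMOD _]
        rw [t2]
    | some false =>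
        show sigmaInvAct i v a ≡ _ [ZMOD _]
        rw [t3]
        exact modEq_reflect (dgcd_dvd v a b)
  rcases eq_or_ne j b with rfl | hjb
  · rw [hperm, Equiv.swap_apply_right]
    have hv : ¬ ((b : ℕ) = (i : ℕ)) := by simp [hb]
    have t1 : tauAct i v b = v a := by
      simp only [tauAct, if_neg hv, ha, hb]; simp
    have t2 : sigmaAct i v b = 2 * v b - v a := by
      simp only [sigmaAct, if_neg hv, ha, hb]; simp
    have t3 : sigmaInvAct i v b = v a := by
      simp only [sigmaInvAct, if_neg hv, ha, hb]; simp
    match o with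
    | none =>
        show tauAct i v b ≡ _ [ZMOD _]
        rw [t1]
    | some true =>
        show sigmaAct i v b ≡ _ [ZMOD _]
        rw [t2]
        exact modEq_reflect (dgcd_dvd v b a)
    | some false =>
        show sigmaInvAct i v b ≡ _ [ZMOD _]
        rw [t3]
  · rw [hperm, Equiv.swap_apply_of_ne_of_ne hja hjb]
    have h1 : ¬ ((j : ℕ) = (i : ℕ)) := fun h => hja (Fin.ext (by simp [ha, h]))
    have h2 : ¬ ((j : ℕ) = (i : ℕ) + 1) := fun h => hjb (Fin.ext (by simp [hb, h]))
    match o with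
    | none =>
        show tauAct i v j ≡ _ [ZMOD _]
        simp only [tauAct, if_neg h1, if_neg h2]
        exact Int.ModEq.refl _
    | some true =>
        show sigmaAct i v j ≡ _ [ZMOD _]
        simp only [sigmaAct, if_neg h1, if_neg h2]
        exact Int.ModEq.refl _
    | some false =>
        show sigmaInvAct i v j ≡ _ [ZMOD _]
        simp only [sigmaInvAct, if_neg h1, if_neg h2]
        exact Int.ModEq.refl _

lemma dvd_dgcd_letter (l : VBraidLetter m) (v : Fin m → ℤ) :
    dgcd v ∣ dgcd (vletterAct l v) := by
  apply dvd_dgcd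
  intro p q
  have hp := (letter_cong l v p).of_dvd ⟨2, by ring⟩
  have hq := (letter_cong l v q).of_dvd ⟨2, by ring⟩
  have h := (hp.sub hq).symm
  have h2 : v (letterPerm l.1 p) ≡ v (letterPerm l.1 q) [ZMOD dgcd v] :=
    (Int.modEq_iff_dvd.2 (by simpa using dgcd_dvd v (letterPerm l.1 q) (letterPerm l.1 p))).symm.symm
  have := (h.trans (Int.ModEq.refl _)).symm
  -- vletterAct l v p - vletterAct l v q ≡ v (s p) - v (s q) ≡ 0
  have hfin : vletterAct l v p ≡ vletterAct l v q [ZMOD dgcd v] :=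
    ((hp.trans h2).trans hq.symm)
  exact Int.ModEq.dvd hfin.symm

lemma letter_dgcd (l : VBraidLetter m) (v : Fin m → ℤ) :
    dgcd (vletterAct l v) = dgcd v := by
  have h1 := dvd_dgcd_letter l v
  have h2 := dvd_dgcd_letter (invLetter l) (vletterAct l v)
  rw [invLetter_act] at h2
  exact Int.dvd_antisymm (dgcd_nonneg _) (dgcd_nonneg _) h2 h1

lemma word_inv (β : List (VBraidLetter m)) (v : Fin m → ℤ) :
    dgcd (vwordAct β v) = dgcd v ∧
      ∀ j : Fin m, vwordAct β v j ≡ v ((vwordPerm β)⁻¹ j) [ZMOD 2 * dgcd v] := by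
  induction β generalizing v with
  | nil =>
      refine ⟨rfl, fun j => ?_⟩
      simp [vwordPerm_nil, vwordAct_nil]
  | cons l β ih =>
      obtain ⟨ihd, ihc⟩ := ih (vletterAct l v)
      rw [vwordAct_cons]
      constructor
      · rw [ihd, letter_dgcd]
      · intro j
        have hd : dgcd (vletterAct l v) = dgcd v := letter_dgcd l v
        have h1 := ihc j
        rw [hd] at h1
        have h2 := letter_cong l v ((vwordPerm β)⁻¹ j)
        have hix : (vwordPerm (l :: β))⁻¹ j = letterPerm l.1 ((vwordPerm β)⁻¹ j) := by
          rw [vwordPerm_cons]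
          rw [mul_inv_rev]
          have : (letterPerm (m := m) l.1)⁻¹ = letterPerm l.1 := by
            show (Equiv.swap _ _)⁻¹ = _
            exact Equiv.swap_inv _ _
          rw [this]
          rfl
        rw [hix]
        exact h1.trans h2

end Stmt18Aux

/-! ### realizing permutations by τ-words, and the basic pure reflection word -/

namespace Stmt18Aux

variable {m : ℕ}

lemma tau_eq (i : Fin (m - 1)) (v : Fin m → ℤ) :
    tauAct i v = v ∘ (letterPerm i) := by
  have hi : (i : ℕ) < m - 1 := i.isLt
  set a : Fin m := ⟨(i : ℕ), by omega⟩ with ha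
  set b : Fin m := ⟨(i : ℕ) + 1, by omega⟩ with hb
  have hperm : letterPerm (m := m) i = Equiv.swap a b := rfl
  funext j
  rcases eq_or_ne j a with rfl | hja
  · rw [Function.comp_apply, hperm, Equiv.swap_apply_left]
    simp only [tauAct, ha, hb]; simp
  rcases eq_or_ne j b with rfl | hjb
  · rw [Function.comp_apply, hperm, Equiv.swap_apply_right]
    have hv : ¬ ((b : ℕ) = (i : ℕ)) := by simp [hb]
    simp only [tauAct, if_neg hv, ha, hb]; simp
  · rw [Function.comp_apply, hperm, Equiv.swap_apply_of_ne_of_ne hja hjb]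
    have h1 : ¬ ((j : ℕ) = (i : ℕ)) := fun h => hja (Fin.ext (by simp [ha, h]))
    have h2 : ¬ ((j : ℕ) = (i : ℕ) + 1) := fun h => hjb (Fin.ext (by simp [hb, h]))
    simp only [tauAct, if_neg h1, if_neg h2]

lemma letterPerm_inv (i : Fin (m - 1)) : (letterPerm (m := m) i)⁻¹ = letterPerm i :=
  Equiv.swap_inv _ _

theorem gen_all (hm : 1 ≤ m) (Q : Equiv.Perm (Fin m)) :
    ∃ γ : List (VBraidLetter m),
      (∀ u : Fin m → ℤ, vwordAct γ u = u ∘ Q) ∧ vwordPerm γ = Q⁻¹ := by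
  obtain ⟨n, rfl⟩ : ∃ n, m = n + 1 := ⟨m - 1, by omega⟩
  have hQ : Q ∈ Submonoid.closure
      (Set.range fun i : Fin n => Equiv.swap i.castSucc i.succ) := by
    rw [Equiv.Perm.mclosure_swap_castSucc_succ]; trivial
  induction hQ using Submonoid.closure_induction with
  | mem x hx =>
      obtain ⟨i, rfl⟩ := hx
      have hi : (i : ℕ) < n + 1 - 1 := by omega
      refine ⟨[((⟨(i : ℕ), hi⟩ : Fin (n + 1 - 1)), none)], ?_, ?_⟩
      · intro u
        have h1 : vwordAct [((⟨(i : ℕ), hi⟩ : Fin (n + 1 - 1)), none)] u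
            = tauAct ⟨(i : ℕ), hi⟩ u := rfl
        rw [h1, tau_eq]
        have : letterPerm (m := n + 1) ⟨(i : ℕ), hi⟩
            = Equiv.swap i.castSucc i.succ := by
          show Equiv.swap _ _ = _
          congr 1
        rw [this]
      · have h1 : vwordPerm [((⟨(i : ℕ), hi⟩ : Fin (n + 1 - 1)), none)]
            = letterPerm ⟨(i : ℕ), hi⟩ := by
          rw [vwordPerm_cons, vwordPerm_nil, one_mul]
        rw [h1]
        have : letterPerm (m := n + 1) ⟨(i : ℕ), hi⟩
            = Equiv.swap i.castSucc i.succ := by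
          show Equiv.swap _ _ = _
          congr 1
        rw [this, Equiv.swap_inv]
  | one => exact ⟨[], fun u => rfl, rfl⟩
  | mul x y _ _ ihx ihy =>
      obtain ⟨γ₁, h1a, h1p⟩ := ihx
      obtain ⟨γ₂, h2a, h2p⟩ := ihy
      refine ⟨γ₁ ++ γ₂, ?_, ?_⟩
      · intro u
        rw [vwordAct_append, h1a, h2a]
        rfl
      · rw [vwordPerm_append, h1p, h2p, mul_inv_rev]

lemma base_act (i : Fin (m - 1)) (a b : Fin m) (ha : (a : ℕ) = (i : ℕ))
    (hb : (b : ℕ) = (i : ℕ) + 1) (u : Fin m → ℤ) :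
    vwordAct [(i, (some true : Option Bool)), (i, none)] u
      = Function.update u a (2 * u b - u a) := by
  have hi : (i : ℕ) < m - 1 := i.isLt
  rcases a with ⟨av, hav⟩
  rcases b with ⟨bv, hbv⟩
  simp only [] at ha hb
  subst ha
  subst hb
  have hact : vwordAct [(i, (some true : Option Bool)), (i, none)] u
      = tauAct i (sigmaAct i u) := rfl
  rw [hact]
  funext j
  rcases j with ⟨jv, hj⟩
  by_cases h1 : jv = (i : ℕ)
  · subst h1
    simp [tauAct, sigmaAct, Function.update_apply, Fin.ext_iff]
  · by_cases h2 : jv = (i : ℕ) + 1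
    · subst h2
      simp [tauAct, sigmaAct, Function.update_apply, Fin.ext_iff, h1]
    · simp [tauAct, sigmaAct, Function.update_apply, Fin.ext_iff, h1, h2]

lemma base_perm (i : Fin (m - 1)) :
    vwordPerm [(i, (some true : Option Bool)), (i, none)] = 1 := by
  rw [vwordPerm_cons, vwordPerm_cons, vwordPerm_nil, one_mul]
  show letterPerm i * letterPerm i = 1
  show Equiv.swap _ _ * Equiv.swap _ _ = 1
  exact Equiv.swap_mul_self _ _

theorem reflect_word (hm : 3 ≤ m) (a b : Fin m) (hab : a ≠ b) :
    ∃ β : List (VBraidLetter m), vwordPerm β = 1 ∧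
      ∀ u : Fin m → ℤ, vwordAct β u = Function.update u a (2 * u b - u a) := by
  have hm1 : 1 ≤ m := by omega
  set z0 : Fin m := ⟨0, by omega⟩ with hz0
  set z1 : Fin m := ⟨1, by omega⟩ with hz1
  have hz01 : z0 ≠ z1 := by simp [hz0, hz1, Fin.ext_iff]
  set s : Equiv.Perm (Fin m) := Equiv.swap z0 a with hs
  set c : Fin m := s b with hc
  have hcz0 : c ≠ z0 := by
    intro h
    apply hab
    have : s c = s z0 := by rw [h]
    rw [hc] at this
    simp only [hs] at this
    rw [Equiv.swap_apply_self, Equiv.swap_apply_left] at this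
    exact this.symm ▸ rfl
  set Q : Equiv.Perm (Fin m) := s * Equiv.swap z1 c with hQ
  have hQ0 : Q z0 = a := by
    rw [hQ]
    simp only [Equiv.Perm.mul_apply]
    rw [Equiv.swap_apply_of_ne_of_ne hz01 hcz0.symm]
    · rw [hs, Equiv.swap_apply_left]
  have hQ1 : Q z1 = b := by
    rw [hQ]
    simp only [Equiv.Perm.mul_apply]
    rw [Equiv.swap_apply_left, hc, hs]
    exact Equiv.swap_apply_self _ _ _
  obtain ⟨γ, hγa, hγp⟩ := gen_all hm1 Q
  obtain ⟨γ', hγ'a, hγ'p⟩ := gen_all hm1 Q⁻¹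
  have h0lt : (0 : ℕ) < m - 1 := by omega
  set i0 : Fin (m - 1) := ⟨0, h0lt⟩ with hi0
  set base : List (VBraidLetter m) := [(i0, (some true : Option Bool)), (i0, none)] with hbase
  refine ⟨γ ++ (base ++ γ'), ?_, ?_⟩
  · rw [vwordPerm_append, vwordPerm_append, hγp, hγ'p, hbase, base_perm, mul_one, inv_inv]
    group
  · intro u
    rw [vwordAct_append, vwordAct_append, hγa, hbase]
    have hza : ((z0 : ℕ) = (i0 : ℕ)) := rfl
    have hzb : ((z1 : ℕ) = (i0 : ℕ) + 1) := rfl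
    rw [base_act i0 z0 z1 hza hzb, hγ'a]
    funext x
    rw [Function.comp_apply]
    rcases eq_or_ne a x with rfl | hxa
    · have hx : Q⁻¹ a = z0 := by rw [← hQ0, Equiv.Perm.inv_eq_iff_eq]
      rw [hx, Function.update_self, Function.update_self]
      rw [Function.comp_apply, Function.comp_apply, hQ0, hQ1]
    · have hne : Q⁻¹ x ≠ z0 := by
        intro h
        apply hxa
        have h2 := congrArg Q h
        rw [← Equiv.Perm.mul_apply, mul_inv_cancel, Equiv.Perm.one_apply, hQ0] at h2
        exact h2.symm
      rw [Function.update_of_ne hne, Function.update_of_ne hxa.symm, Function.comp_apply,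
        ← Equiv.Perm.mul_apply, mul_inv_cancel, Equiv.Perm.one_apply]

end Stmt18Aux

/-! ### the abstract reflection step relation -/

namespace Stmt18Aux

variable {m : ℕ}

/-- One reflection step: replace `u a` by `2 u b - u a`. -/
def Step (u w : Fin m → ℤ) : Prop :=
  ∃ a b : Fin m, a ≠ b ∧ w = Function.update u a (2 * u b - u a)

/-- Reachability by reflections. -/
def PReach : (Fin m → ℤ) → (Fin m → ℤ) → Prop := Relation.ReflTransGen Step

lemma Step.symm {u w : Fin m → ℤ} (h : Step u w) : Step w u := by
  obtain ⟨a, b, hab, rfl⟩ := h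
  refine ⟨a, b, hab, ?_⟩
  funext x
  rcases eq_or_ne x a with rfl | hxa
  · rw [Function.update_self]
    rw [Function.update_of_ne hab.symm, Function.update_self]
    ring
  · rw [Function.update_of_ne hxa, Function.update_of_ne hxa]

lemma PReach.refl (u : Fin m → ℤ) : PReach u u := Relation.ReflTransGen.refl

lemma PReach.trans {u v w : Fin m → ℤ} (h1 : PReach u v) (h2 : PReach v w) :
    PReach u w := Relation.ReflTransGen.trans h1 h2

lemma PReach.single {u w : Fin m → ℤ} (h : Step u w) : PReach u w :=
  Relation.ReflTransGen.single h

lemma PReach.symm {u w : Fin m → ℤ} (h : PReach u w) : PReach w u := by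
  induction h with
  | refl => exact PReach.refl _
  | tail _ hstep ih => exact ((PReach.single hstep.symm).trans ih : PReach _ _)

lemma step_cong {u w : Fin m → ℤ} (h : Step u w) (i : Fin m) :
    w i ≡ u i [ZMOD 2 * dgcd u] := by
  obtain ⟨a, b, hab, rfl⟩ := h
  rcases eq_or_ne i a with rfl | hia
  · rw [Function.update_self]
    exact modEq_reflect (dgcd_dvd u b i)
  · rw [Function.update_of_ne hia]

lemma step_dgcd {u w : Fin m → ℤ} (h : Step u w) : dgcd w = dgcd u := by
  have key : ∀ {u w : Fin m → ℤ}, Step u w → dgcd u ∣ dgcd w := by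
    intro u w h
    apply dvd_dgcd
    intro p q
    have hp := (step_cong h p).of_dvd ⟨2, by ring⟩
    have hq := (step_cong h q).of_dvd ⟨2, by ring⟩
    have hpq : u p ≡ u q [ZMOD dgcd u] :=
      (Int.modEq_iff_dvd.2 (by simpa using dgcd_dvd u q p)).symm.symm
    exact Int.ModEq.dvd ((hp.trans (hpq.trans hq.symm)).symm)
  exact Int.dvd_antisymm (dgcd_nonneg _) (dgcd_nonneg _) (key h.symm) (key h)

lemma preach_dgcd {u w : Fin m → ℤ} (h : PReach u w) : dgcd w = dgcd u := by
  induction h with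
  | refl => rfl
  | tail _ hstep ih => rw [step_dgcd hstep, ih]

lemma preach_cong {u w : Fin m → ℤ} (h : PReach u w) (i : Fin m) :
    w i ≡ u i [ZMOD 2 * dgcd u] := by
  induction h with
  | @tail v w huv hstep ih =>
      have h2 := step_cong hstep i
      rw [preach_dgcd huv] at h2
      exact h2.trans ih
  | refl => exact Int.ModEq.refl _

/-- Bridge: reflection reachability implies virtual-pure-braid equivalence. -/
lemma PReach.vpure (hm : 3 ≤ m) {u w : Fin m → ℤ} (h : PReach u w) :
    VPureEquiv u w := by
  induction h with
  | refl => exact ⟨[], rfl, rfl⟩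
  | tail _ hstep ih =>
      obtain ⟨β₁, hβ₁a, hβ₁p⟩ := ih
      obtain ⟨a, b, hab, rfl⟩ := hstep
      obtain ⟨β₂, hβ₂p, hβ₂a⟩ := reflect_word hm a b hab
      exact ⟨β₁ ++ β₂, by rw [vwordAct_append, hβ₁a, hβ₂a],
        by rw [vwordPerm_append, hβ₁p, hβ₂p, one_mul]⟩

/-! ### translation moves using a mirror pair -/

lemma trans_move (u : Fin m → ℤ) (j k p : Fin m) (hjk : j ≠ k) (hpj : p ≠ j)
    (hpk : p ≠ k) (t : ℤ) :
    PReach u (Function.update u p (u p + 2 * (u j - u k) * t)) := by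
  induction t using Int.induction_on with
  | zero => simpa using PReach.refl u
  | succ n ih =>
      apply ih.trans
      set v₁ := Function.update u p (u p + 2 * (u j - u k) * n) with hv₁
      have hj1 : v₁ j = u j := Function.update_of_ne hpj.symm _ _
      have hk1 : v₁ k = u k := Function.update_of_ne hpk.symm _ _
      have hp1 : v₁ p = u p + 2 * (u j - u k) * n := Function.update_self _ _ _
      have s1 : Step v₁ (Function.update v₁ p (2 * v₁ k - v₁ p)) := ⟨p, k, hpk, rfl⟩
      set v₂ := Function.update v₁ p (2 * v₁ k - v₁ p) with hv₂
      have hj2 : v₂ j = u j := by rw [hv₂, Function.update_of_ne hpj.symm, hj1]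
      have hp2 : v₂ p = 2 * u k - (u p + 2 * (u j - u k) * n) := by
        rw [hv₂, Function.update_self, hk1, hp1]
      have s2 : Step v₂ (Function.update v₂ p (2 * v₂ j - v₂ p)) := ⟨p, j, hpj, rfl⟩
      have heq : Function.update v₂ p (2 * v₂ j - v₂ p)
          = Function.update u p (u p + 2 * (u j - u k) * ((n : ℤ) + 1)) := by
        funext x
        rcases eq_or_ne x p with rfl | hxp
        · rw [Function.update_self, Function.update_self, hj2, hp2]
          ring
        · rw [Function.update_of_ne hxp, Function.update_of_ne hxp, hv₂,
            Function.update_of_ne hxp, hv₁, Function.update_of_ne hxp]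
      exact ((PReach.single s1).trans (PReach.single (heq ▸ s2 : Step v₂ _)))
  | pred n ih =>
      apply ih.trans
      set v₁ := Function.update u p (u p + 2 * (u j - u k) * (-(n : ℤ))) with hv₁
      have hj1 : v₁ j = u j := Function.update_of_ne hpj.symm _ _
      have hk1 : v₁ k = u k := Function.update_of_ne hpk.symm _ _
      have hp1 : v₁ p = u p + 2 * (u j - u k) * (-(n : ℤ)) := Function.update_self _ _ _
      have s1 : Step v₁ (Function.update v₁ p (2 * v₁ j - v₁ p)) := ⟨p, j, hpj, rfl⟩
      set v₂ := Function.update v₁ p (2 * v₁ j - v₁ p) with hv₂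
      have hk2 : v₂ k = u k := by rw [hv₂, Function.update_of_ne hpk.symm, hk1]
      have hp2 : v₂ p = 2 * u j - (u p + 2 * (u j - u k) * (-(n : ℤ))) := by
        rw [hv₂, Function.update_self, hj1, hp1]
      have s2 : Step v₂ (Function.update v₂ p (2 * v₂ k - v₂ p)) := ⟨p, k, hpk, rfl⟩
      have heq : Function.update v₂ p (2 * v₂ k - v₂ p)
          = Function.update u p (u p + 2 * (u j - u k) * (-(n : ℤ) - 1)) := by
        funext x
        rcases eq_or_ne x p with rfl | hxp
        · rw [Function.update_self, Function.update_self, hk2, hp2]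
          ring
        · rw [Function.update_of_ne hxp, Function.update_of_ne hxp, hv₂,
            Function.update_of_ne hxp, hv₁, Function.update_of_ne hxp]
      exact ((PReach.single s1).trans (PReach.single (heq ▸ s2 : Step v₂ _)))

/-- rigid translation of a pair at mutual reflection distance -/
lemma pair_rigid (u : Fin m → ℤ) (p q : Fin m) (hpq : p ≠ q) (n : ℤ) :
    PReach u (Function.update (Function.update u p (u p + 2 * (u p - u q) * n)) q
      (u q + 2 * (u p - u q) * n)) := by
  induction n using Int.induction_on with
  | zero =>
      have h0 : Function.update (Function.update u p (u p + 2 * (u p - u q) * 0)) q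
          (u q + 2 * (u p - u q) * 0) = u := by
        funext x
        rcases eq_or_ne x q with rfl | hxq
        · rw [Function.update_self]; ring
        · rw [Function.update_of_ne hxq]
          rcases eq_or_ne x p with rfl | hxp
          · rw [Function.update_self]; ring
          · rw [Function.update_of_ne hxp]
      rw [h0]
      exact PReach.refl u
  | succ n ih =>
      apply ih.trans
      set A := u p + 2 * (u p - u q) * (n : ℤ) with hA
      set B := u q + 2 * (u p - u q) * (n : ℤ) with hB
      set v₁ := Function.update (Function.update u p A) q B with hv₁
      have hv₁p : v₁ p = A := by
        rw [hv₁, Function.update_of_ne hpq, Function.update_self]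
      have hv₁q : v₁ q = B := by rw [hv₁, Function.update_self]
      have s1 : Step v₁ (Function.update v₁ q (2 * v₁ p - v₁ q)) := ⟨q, p, hpq.symm, rfl⟩
      set v₂ := Function.update v₁ q (2 * v₁ p - v₁ q) with hv₂
      have hv₂p : v₂ p = A := by rw [hv₂, Function.update_of_ne hpq, hv₁p]
      have hv₂q : v₂ q = 2 * A - B := by rw [hv₂, Function.update_self, hv₁p, hv₁q]
      have s2 : Step v₂ (Function.update v₂ p (2 * v₂ q - v₂ p)) := ⟨p, q, hpq, rfl⟩
      have heq : Function.update v₂ p (2 * v₂ q - v₂ p)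
          = Function.update (Function.update u p (u p + 2 * (u p - u q) * ((n : ℤ) + 1))) q
              (u q + 2 * (u p - u q) * ((n : ℤ) + 1)) := by
        funext x
        rcases eq_or_ne x p with rfl | hxp
        · rw [Function.update_self, Function.update_of_ne hpq, Function.update_self,
            hv₂q, hv₂p, hA, hB]
          ring
        · rw [Function.update_of_ne hxp]
          rcases eq_or_ne x q with rfl | hxq
          · rw [Function.update_self, hv₂, Function.update_self, hv₁p, hv₁q, hA, hB]
            ring
          · rw [hv₂, Function.update_of_ne hxq, hv₁, Function.update_of_ne hxq,
              Function.update_of_ne hxp, Function.update_of_ne hxq,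
              Function.update_of_ne hxp]
      exact ((PReach.single s1).trans (PReach.single (heq ▸ s2 : Step v₂ _)))
  | pred n ih =>
      apply ih.trans
      set A := u p + 2 * (u p - u q) * (-(n : ℤ)) with hA
      set B := u q + 2 * (u p - u q) * (-(n : ℤ)) with hB
      set v₁ := Function.update (Function.update u p A) q B with hv₁
      have hv₁p : v₁ p = A := by
        rw [hv₁, Function.update_of_ne hpq, Function.update_self]
      have hv₁q : v₁ q = B := by rw [hv₁, Function.update_self]
      have s1 : Step v₁ (Function.update v₁ p (2 * v₁ q - v₁ p)) := ⟨p, q, hpq, rfl⟩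
      set v₂ := Function.update v₁ p (2 * v₁ q - v₁ p) with hv₂
      have hv₂q : v₂ q = B := by rw [hv₂, Function.update_of_ne hpq.symm, hv₁q]
      have hv₂p : v₂ p = 2 * B - A := by rw [hv₂, Function.update_self, hv₁p, hv₁q]
      have s2 : Step v₂ (Function.update v₂ q (2 * v₂ p - v₂ q)) := ⟨q, p, hpq.symm, rfl⟩
      have heq : Function.update v₂ q (2 * v₂ p - v₂ q)
          = Function.update (Function.update u p (u p + 2 * (u p - u q) * (-(n : ℤ) - 1))) q
              (u q + 2 * (u p - u q) * (-(n : ℤ) - 1)) := by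
        funext x
        rcases eq_or_ne x q with rfl | hxq
        · rw [Function.update_self, Function.update_self, hv₂p, hv₂q, hA, hB]
          ring
        · rw [Function.update_of_ne hxq, Function.update_of_ne hxq]
          rcases eq_or_ne x p with rfl | hxp
          · rw [Function.update_self, hv₂, Function.update_self, hv₁p, hv₁q, hA, hB]
            ring
          · rw [hv₂, Function.update_of_ne hxp, hv₁, Function.update_of_ne hxq,
              Function.update_of_ne hxp, Function.update_of_ne hxp]
      exact ((PReach.single s1).trans (PReach.single (heq ▸ s2 : Step v₂ _)))

end Stmt18Aux

/-! ### Euclid-style reduction and the canonical form -/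

namespace Stmt18Aux

variable {m : ℕ}

lemma red {δ x : ℤ} (hδ : δ ≠ 0) (hx : ¬ δ ∣ x) :
    ∃ r : ℤ, (2 * δ) ∣ (r - x) ∧ 0 < |r| ∧ |r| < |δ| := by
  have habs : 0 < |δ| := abs_pos.2 hδ
  set M : ℤ := 2 * |δ| with hM
  have hM0 : 0 < M := by omega
  set r0 := x % M with hr0
  have h0 : 0 ≤ r0 := Int.emod_nonneg x (by omega)
  have h1 : r0 < M := Int.emod_lt_of_pos x hM0
  have hdvdM : M ∣ x - r0 := ⟨x / M, by rw [hr0, Int.emod_def]; ring⟩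
  have h2 : (2 * δ) ∣ x - r0 := by
    rcases abs_cases δ with ⟨he, _⟩ | ⟨he, _⟩
    · rwa [hM, he] at hdvdM
    · rw [hM, he] at hdvdM
      obtain ⟨c, hc⟩ := hdvdM
      exact ⟨-c, by linarith [hc]⟩
  have hr0nd : ¬ δ ∣ r0 := by
    intro h
    apply hx
    have h3 : δ ∣ x - r0 := dvd_trans ⟨2, by ring⟩ h2
    have h4 := dvd_add h3 h
    simpa using h4
  have hr0ne : r0 ≠ 0 := fun h => hr0nd (h ▸ dvd_zero δ)
  have hr0neδ : r0 ≠ |δ| := by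
    intro h
    exact hr0nd (by rw [h]; exact (dvd_abs δ δ).2 dvd_rfl)
  by_cases hlt : r0 < |δ|
  · refine ⟨r0, ?_, ?_, ?_⟩
    · obtain ⟨c, hc⟩ := h2
      exact ⟨-c, by linarith⟩
    · rw [abs_of_nonneg h0]; omega
    · rw [abs_of_nonneg h0]; omega
  · refine ⟨r0 - M, ?_, ?_, ?_⟩
    · obtain ⟨c, hc⟩ := h2
      have hMe : M = 2 * δ ∨ M = -(2 * δ) := by
        rcases abs_cases δ with ⟨he, _⟩ | ⟨he, _⟩
        · left; rw [hM, he]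
        · right; rw [hM, he]; ring
      rcases hMe with he | he
      · exact ⟨-c - 1, by rw [he]; linarith [hc]⟩
      · exact ⟨-c + 1, by rw [he]; linarith [hc]⟩
    · have hneg : r0 - M < 0 := by omega
      rw [abs_of_neg hneg]
      omega
    · have hneg : r0 - M < 0 := by omega
      rw [abs_of_neg hneg]
      push_neg at hlt
      omega

lemma euclid_aux (hm : 3 ≤ m) {d : ℤ} (hd : 0 < d) :
    ∀ n : ℕ, ∀ u : Fin m → ℤ, dgcd u = d → ∀ j k : Fin m, j ≠ k →
      (u j - u k).natAbs = n → u j ≠ u k →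
      ∃ u' : Fin m → ℤ, ∃ p q : Fin m, PReach u u' ∧ p ≠ q ∧ u' p - u' q = d := by
  intro n
  induction n using Nat.strong_induction_on with
  | _ n ih =>
    intro u hu j k hjk hn hne
    have hδ0 : u j - u k ≠ 0 := sub_ne_zero.2 hne
    by_cases h1 : u j - u k = d
    · exact ⟨u, j, k, PReach.refl u, hjk, h1⟩
    by_cases h2 : u j - u k = -d
    · exact ⟨u, k, j, PReach.refl u, hjk.symm, by linarith⟩
    -- there is a pair whose difference is not divisible by δ := u j - u k
    have hex : ∃ p q : Fin m, ¬ (u j - u k) ∣ (u p - u q) := by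
      by_contra hc
      push_neg at hc
      have hdd : (u j - u k) ∣ d := hu ▸ dvd_dgcd fun p q => hc p q
      have hd2 : d ∣ (u j - u k) := hu ▸ dgcd_dvd u j k
      have hle1 : |u j - u k| ≤ d := Int.le_of_dvd hd ((abs_dvd _ _).2 hdd)
      have hle2 : d ≤ |u j - u k| :=
        Int.le_of_dvd (abs_pos.2 hδ0) ((dvd_abs _ _).2 hd2)
      have habs : |u j - u k| = d := le_antisymm hle1 hle2
      rcases (abs_eq hd.le).1 habs with he | he
      · exact h1 he
      · exact h2 he
    obtain ⟨p0, q0, hp0⟩ := hex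
    have hmove : ∃ p q : Fin m, p ≠ j ∧ p ≠ k ∧ p ≠ q ∧ ¬ (u j - u k) ∣ (u p - u q) := by
      have hself : ∀ x : Fin m, (u j - u k) ∣ (u x - u x) := by
        intro x; simp
      have hp0q0 : p0 ≠ q0 := by
        intro h; subst h; exact hp0 (hself p0)
      by_cases hc1 : p0 = j
      · have hq0j : q0 ≠ j := fun h => hp0q0 (hc1.trans h.symm)
        have hq0k : q0 ≠ k := by
          intro h
          apply hp0
          rw [hc1, h]
        refine ⟨q0, p0, hq0j, hq0k, hp0q0.symm, fun hdvd => hp0 ?_⟩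
        have h5 := dvd_neg.2 hdvd
        simpa using h5
      · by_cases hc2 : p0 = k
        · have hq0k : q0 ≠ k := fun h => hp0q0 (hc2.trans h.symm)
          have hq0j : q0 ≠ j := by
            intro h
            apply hp0
            rw [hc2, h]
            exact ⟨-1, by ring⟩
          refine ⟨q0, p0, hq0j, hq0k, hp0q0.symm, fun hdvd => hp0 ?_⟩
          have h5 := dvd_neg.2 hdvd
          simpa using h5
        · exact ⟨p0, q0, hc1, hc2, hp0q0, hp0⟩
    obtain ⟨p, q, hpj, hpk, hpq, hnd⟩ := hmove
    obtain ⟨r, hrd, hr0, hrδ⟩ := red hδ0 hnd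
    obtain ⟨t, ht⟩ := hrd
    have hreach : PReach u (Function.update u p (u p + 2 * (u j - u k) * t)) :=
      trans_move u j k p hjk hpj hpk t
    set u₂ := Function.update u p (u p + 2 * (u j - u k) * t) with hu₂
    have hu₂d : dgcd u₂ = d := by rw [preach_dgcd hreach, hu]
    have hq2 : u₂ q = u q := Function.update_of_ne hpq.symm _ _
    have hp2 : u₂ p = u p + 2 * (u j - u k) * t := Function.update_self _ _ _
    have hdiff : u₂ p - u₂ q = r := by rw [hp2, hq2]; linarith [ht]
    have hlt : (u₂ p - u₂ q).natAbs < n := by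
      rw [hdiff]
      have e1 : (r.natAbs : ℤ) < ((u j - u k).natAbs : ℤ) := by
        rw [← Int.abs_eq_natAbs, ← Int.abs_eq_natAbs]; exact hrδ
      have e2 : r.natAbs < (u j - u k).natAbs := by exact_mod_cast e1
      omega
    have hne2 : u₂ p ≠ u₂ q := by
      intro h
      rw [sub_eq_zero.2 h] at hdiff
      rw [← hdiff] at hr0
      simp at hr0
    obtain ⟨u', P, Q, hh1, hh2, hh3⟩ := ih _ hlt u₂ hu₂d p q hpq rfl hne2
    exact ⟨u', P, Q, hreach.trans hh1, hh2, hh3⟩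

lemma euclid (hm : 3 ≤ m) (u : Fin m → ℤ) (hd : 0 < dgcd u) :
    ∃ u' : Fin m → ℤ, ∃ p q : Fin m, PReach u u' ∧ p ≠ q ∧ u' p - u' q = dgcd u := by
  obtain ⟨j, k, hne⟩ := exists_ne_of_dgcd_ne_zero (ne_of_gt hd)
  have hjk : j ≠ k := fun h => hne (by rw [h])
  exact euclid_aux hm hd _ u rfl j k hjk rfl hne

lemma fixset (u : Fin m → ℤ) {d : ℤ} (hd : 0 < d) (j k : Fin m)
    (hjk : j ≠ k) (hgap : u j - u k = d) (s : Finset (Fin m)) :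
    j ∉ s → k ∉ s →
      PReach u (fun i => if i ∈ s then u i % (2 * d) else u i) := by
  induction s using Finset.induction_on with
  | empty => intro _ _; simpa using PReach.refl u
  | @insert p s hps ih =>
      intro hjs hks
      have hjs' : j ∉ s := fun h => hjs (Finset.mem_insert_of_mem h)
      have hks' : k ∉ s := fun h => hks (Finset.mem_insert_of_mem h)
      have hpj : p ≠ j := by
        intro h; subst h; exact hjs (Finset.mem_insert_self p s)
      have hpk : p ≠ k := by
        intro h; subst h; exact hks (Finset.mem_insert_self p s)
      set v : Fin m → ℤ := fun i => if i ∈ s then u i % (2 * d) else u i with hv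
      have hw : PReach u v := ih hjs' hks'
      have hvj : v j = u j := by simp [hv, hjs']
      have hvk : v k = u k := by simp [hv, hks']
      have hvp : v p = u p := by simp [hv, hps]
      have hmv : PReach v (Function.update v p (v p + 2 * (v j - v k) * (-(u p / (2 * d))))) :=
        trans_move v j k p hjk hpj hpk _
      have hval : v p + 2 * (v j - v k) * (-(u p / (2 * d))) = u p % (2 * d) := by
        rw [hvp, hvj, hvk, hgap, Int.emod_def]
        ring
      have hfn : Function.update v p (v p + 2 * (v j - v k) * (-(u p / (2 * d))))
          = fun i => if i ∈ insert p s then u i % (2 * d) else u i := by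
        funext x
        rcases eq_or_ne x p with rfl | hxp
        · rw [Function.update_self, hval]
          simp [Finset.mem_insert_self]
        · rw [Function.update_of_ne hxp, hv]
          simp [Finset.mem_insert, hxp]
      exact hw.trans (hfn ▸ hmv)

lemma gap_pm {d a b : ℤ} (hd : 0 < d) (ha : 0 ≤ a) (ha2 : a < 2 * d) (hb : 0 ≤ b)
    (hb2 : b < 2 * d) (h : (2 * d) ∣ (a - b - d)) : a - b = d ∨ a - b = -d := by
  obtain ⟨c, hc⟩ := h
  have h1 : c < 1 := by nlinarith
  have h2 : -2 < c := by nlinarith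
  interval_cases c
  · right; linarith
  · left; linarith

lemma endgame (u : Fin m → ℤ) {d : ℤ} (hd : 0 < d) (p q : Fin m) (hpq : p ≠ q)
    (hgap : u p - u q = d) (P Q : ℤ) (hP : (2 * d) ∣ (P - u p)) (hQ : (2 * d) ∣ (Q - u q))
    (hPQ : P - Q = d ∨ P - Q = -d) :
    PReach u (Function.update (Function.update u p P) q Q) := by
  rcases hPQ with hcase | hcase
  · obtain ⟨n, hn⟩ := hP
    have hPn : P = u p + 2 * (u p - u q) * n := by rw [hgap]; linarith
    have hQn : Q = u q + 2 * (u p - u q) * n := by rw [hgap]; linarith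
    rw [hPn, hQn]
    exact pair_rigid u p q hpq n
  · set u₁ := Function.update u q (2 * u p - u q) with hu₁
    have s1 : Step u u₁ := ⟨q, p, hpq.symm, rfl⟩
    have h₁p : u₁ p = u p := Function.update_of_ne hpq _ _
    have h₁q : u₁ q = 2 * u p - u q := Function.update_self _ _ _
    obtain ⟨n₁, hn₁⟩ := hP
    have hPval : P = u p + 2 * d * n₁ := by linarith
    have hQval : Q = 2 * u p - u q + 2 * d * n₁ := by linarith
    have target : Function.update (Function.update u₁ p
          (u₁ p + 2 * (u₁ p - u₁ q) * (-n₁))) q (u₁ q + 2 * (u₁ p - u₁ q) * (-n₁))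
        = Function.update (Function.update u p P) q Q := by
      funext x
      rcases eq_or_ne x q with rfl | hxq
      · rw [Function.update_self, Function.update_self, h₁p, h₁q, hQval, ← hgap]
        ring
      · rw [Function.update_of_ne hxq, Function.update_of_ne hxq]
        rcases eq_or_ne x p with rfl | hxp
        · rw [Function.update_self, Function.update_self, h₁p, h₁q, hPval, ← hgap]
          ring
        · rw [Function.update_of_ne hxp, Function.update_of_ne hxp, hu₁,
            Function.update_of_ne hxq]
    exact (PReach.single s1).trans (target ▸ pair_rigid u₁ p q hpq (-n₁))

end Stmt18Aux

/-! ### canonical form -/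

namespace Stmt18Aux

variable {m : ℕ}

theorem core (hm : 3 ≤ m) (u : Fin m → ℤ) (hd : 0 < dgcd u) :
    PReach u (fun i => u i % (2 * dgcd u)) := by
  set d := dgcd u with hdd
  have hd2 : (0 : ℤ) < 2 * d := by linarith
  have hd2ne : (2 * d) ≠ 0 := ne_of_gt hd2
  obtain ⟨u₁, j, k, h1, hjk, hgap⟩ := euclid hm u hd
  have hu₁d : dgcd u₁ = d := preach_dgcd h1
  have hres : ∀ i, u₁ i % (2 * d) = u i % (2 * d) := fun i => preach_cong h1 i
  set s : Finset (Fin m) := Finset.univ \ {j, k} with hs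
  have hjs : j ∉ s := by simp [hs]
  have hks : k ∉ s := by simp [hs]
  set u₂ : Fin m → ℤ := fun i => if i ∈ s then u₁ i % (2 * d) else u₁ i with hu₂
  have h2 : PReach u₁ u₂ := fixset u₁ hd j k hjk hgap s hjs hks
  -- pick a third coordinate
  have hsne : s.Nonempty := by
    rw [← Finset.card_pos, hs, Finset.card_sdiff_of_subset (Finset.subset_univ _)]
    have hc2 : ({j, k} : Finset (Fin m)).card ≤ 2 :=
      (Finset.card_insert_le _ _).trans (by simp)
    have hcu : (Finset.univ : Finset (Fin m)).card = m := by simp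
    omega
  obtain ⟨i₀, hi₀⟩ := hsne
  have hi₀j : i₀ ≠ j := by
    intro h; rw [hs] at hi₀; simp [h] at hi₀
  have hi₀k : i₀ ≠ k := by
    intro h; rw [hs] at hi₀; simp [h] at hi₀
  have h₂j : u₂ j = u₁ j := by simp [hu₂, hjs]
  have h₂k : u₂ k = u₁ k := by simp [hu₂, hks]
  have h₂i₀ : u₂ i₀ = u₁ i₀ % (2 * d) := by simp [hu₂, hi₀]
  have h₂other : ∀ x : Fin m, x ≠ j → x ≠ k → u₂ x = u₁ x % (2 * d) := by
    intro x hxj hxk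
    have hx : x ∈ s := by simp [hs, hxj, hxk]
    simp [hu₂, hx]
  have hgap2 : u₂ j - u₂ k = d := by rw [h₂j, h₂k, hgap]
  have hemod : ∀ a : ℤ, (2 * d) ∣ (a % (2 * d) - a) :=
    fun a => ⟨-(a / (2 * d)), by rw [Int.emod_def]; ring⟩
  have hrb : ∀ a : ℤ, 0 ≤ a % (2 * d) ∧ a % (2 * d) < 2 * d :=
    fun a => ⟨Int.emod_nonneg a hd2ne, Int.emod_lt_of_pos a hd2⟩
  have hdvd0 : d ∣ (u₂ i₀ - u₁ k) := by
    have e1 : (2 * d) ∣ (u₂ i₀ - u₁ i₀) := by rw [h₂i₀]; exact hemod (u₁ i₀)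
    have e2 : d ∣ (u₁ i₀ - u₁ k) := hu₁d ▸ dgcd_dvd u₁ i₀ k
    have e3 : d ∣ (u₂ i₀ - u₁ i₀) := dvd_trans ⟨2, by ring⟩ e1
    have e4 := dvd_add e3 e2
    simpa using e4
  obtain ⟨c, hc⟩ := hdvd0
  have hj1 : u₁ j = u₁ k + d := by linarith
  rcases Int.even_or_odd c with ⟨c2, hc2⟩ | ⟨c2, hc2⟩
  · -- CASE A : u₂ i₀ ≡ u₁ k  mod 2d.  Move i₀ to u₁ k.
    subst hc2
    have hmv : PReach u₂ (Function.update u₂ i₀ (u₂ i₀ + 2 * (u₂ j - u₂ k) * (-c2))) :=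
      trans_move u₂ j k i₀ hjk hi₀j hi₀k (-c2)
    have hval : u₂ i₀ + 2 * (u₂ j - u₂ k) * (-c2) = u₁ k := by
      rw [hgap2]; linear_combination hc
    rw [hval] at hmv
    set u₃ := Function.update u₂ i₀ (u₁ k) with hu₃
    have h₃j : u₃ j = u₁ j := by rw [hu₃, Function.update_of_ne hi₀j.symm, h₂j]
    have h₃k : u₃ k = u₁ k := by rw [hu₃, Function.update_of_ne hi₀k.symm, h₂k]
    have h₃i₀ : u₃ i₀ = u₁ k := Function.update_self _ _ _
    have h₃other : ∀ x : Fin m, x ≠ j → x ≠ k → x ≠ i₀ → u₃ x = u₁ x % (2 * d) := by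
      intro x hxj hxk hxi
      rw [hu₃, Function.update_of_ne hxi, h₂other x hxj hxk]
    have hmv2 : PReach u₃
        (Function.update u₃ k (u₃ k + 2 * (u₃ j - u₃ i₀) * (-(u₁ k / (2 * d))))) :=
      trans_move u₃ j i₀ k hi₀j.symm hjk.symm hi₀k.symm _
    have hval2 : u₃ k + 2 * (u₃ j - u₃ i₀) * (-(u₁ k / (2 * d))) = u₁ k % (2 * d) := by
      rw [h₃k, h₃j, h₃i₀, hj1, Int.emod_def]; ring
    rw [hval2] at hmv2
    set u₄ := Function.update u₃ k (u₁ k % (2 * d)) with hu₄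
    have h₄j : u₄ j = u₁ j := by rw [hu₄, Function.update_of_ne hjk, h₃j]
    have h₄i₀ : u₄ i₀ = u₁ k := by rw [hu₄, Function.update_of_ne hi₀k, h₃i₀]
    have h₄k : u₄ k = u₁ k % (2 * d) := Function.update_self _ _ _
    have h₄other : ∀ x : Fin m, x ≠ j → x ≠ k → x ≠ i₀ → u₄ x = u₁ x % (2 * d) := by
      intro x hxj hxk hxi
      rw [hu₄, Function.update_of_ne hxk, h₃other x hxj hxk hxi]
    have hgap4 : u₄ j - u₄ i₀ = d := by rw [h₄j, h₄i₀, hj1]; ring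
    have hPd : (2 * d) ∣ (u₁ j % (2 * d) - u₄ j) := by rw [h₄j]; exact hemod (u₁ j)
    have hQd : (2 * d) ∣ (u₁ i₀ % (2 * d) - u₄ i₀) := by
      rw [h₄i₀, ← h₂i₀]
      exact ⟨c2, by linear_combination hc⟩
    have hPQ : u₁ j % (2 * d) - u₁ i₀ % (2 * d) = d ∨
        u₁ j % (2 * d) - u₁ i₀ % (2 * d) = -d := by
      apply gap_pm hd (hrb _).1 (hrb _).2 (hrb _).1 (hrb _).2
      have e1 : u₁ j % (2 * d) - u₁ i₀ % (2 * d) - d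
          = (u₁ j % (2 * d) - u₄ j) - (u₁ i₀ % (2 * d) - u₄ i₀) + (u₄ j - u₄ i₀ - d) := by
        ring
      rw [e1, hgap4]
      simpa using dvd_sub hPd hQd
    have hfinal : PReach u₄ (Function.update (Function.update u₄ j (u₁ j % (2 * d))) i₀
        (u₁ i₀ % (2 * d))) :=
      endgame u₄ hd j i₀ hi₀j.symm hgap4 _ _ hPd hQd hPQ
    have htarget : Function.update (Function.update u₄ j (u₁ j % (2 * d))) i₀
        (u₁ i₀ % (2 * d)) = fun i => u i % (2 * dgcd u) := by
      funext x
      show _ = u x % (2 * dgcd u)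
      rw [← hdd, ← hres x]
      rcases eq_or_ne x i₀ with rfl | hxi
      · rw [Function.update_self]
      rw [Function.update_of_ne hxi]
      rcases eq_or_ne x j with rfl | hxj
      · rw [Function.update_self]
      rw [Function.update_of_ne hxj]
      rcases eq_or_ne x k with rfl | hxk
      · exact h₄k
      · exact h₄other x hxj hxk hxi
    exact h1.trans (h2.trans (hmv.trans (hmv2.trans (htarget ▸ hfinal))))
  · -- CASE B : u₂ i₀ ≡ u₁ k + d  mod 2d.  Move i₀ to u₁ k + d.
    subst hc2
    have hmv : PReach u₂ (Function.update u₂ i₀ (u₂ i₀ + 2 * (u₂ j - u₂ k) * (-c2))) :=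
      trans_move u₂ j k i₀ hjk hi₀j hi₀k (-c2)
    have hval : u₂ i₀ + 2 * (u₂ j - u₂ k) * (-c2) = u₁ k + d := by
      rw [hgap2]; linear_combination hc
    rw [hval] at hmv
    set u₃ := Function.update u₂ i₀ (u₁ k + d) with hu₃
    have h₃j : u₃ j = u₁ j := by rw [hu₃, Function.update_of_ne hi₀j.symm, h₂j]
    have h₃k : u₃ k = u₁ k := by rw [hu₃, Function.update_of_ne hi₀k.symm, h₂k]
    have h₃i₀ : u₃ i₀ = u₁ k + d := Function.update_self _ _ _
    have h₃other : ∀ x : Fin m, x ≠ j → x ≠ k → x ≠ i₀ → u₃ x = u₁ x % (2 * d) := by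
      intro x hxj hxk hxi
      rw [hu₃, Function.update_of_ne hxi, h₂other x hxj hxk]
    have hmv2 : PReach u₃
        (Function.update u₃ j (u₃ j + 2 * (u₃ i₀ - u₃ k) * (-(u₁ j / (2 * d))))) :=
      trans_move u₃ i₀ k j hi₀k hi₀j.symm hjk _
    have hval2 : u₃ j + 2 * (u₃ i₀ - u₃ k) * (-(u₁ j / (2 * d))) = u₁ j % (2 * d) := by
      rw [h₃j, h₃i₀, h₃k, Int.emod_def]; ring
    rw [hval2] at hmv2
    set u₄ := Function.update u₃ j (u₁ j % (2 * d)) with hu₄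
    have h₄i₀ : u₄ i₀ = u₁ k + d := by rw [hu₄, Function.update_of_ne hi₀j, h₃i₀]
    have h₄k : u₄ k = u₁ k := by rw [hu₄, Function.update_of_ne hjk.symm, h₃k]
    have h₄j : u₄ j = u₁ j % (2 * d) := Function.update_self _ _ _
    have h₄other : ∀ x : Fin m, x ≠ j → x ≠ k → x ≠ i₀ → u₄ x = u₁ x % (2 * d) := by
      intro x hxj hxk hxi
      rw [hu₄, Function.update_of_ne hxj, h₃other x hxj hxk hxi]
    have hgap4 : u₄ i₀ - u₄ k = d := by rw [h₄i₀, h₄k]; ring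
    have hPd : (2 * d) ∣ (u₁ i₀ % (2 * d) - u₄ i₀) := by
      rw [h₄i₀, ← h₂i₀]
      exact ⟨c2, by linear_combination hc⟩
    have hQd : (2 * d) ∣ (u₁ k % (2 * d) - u₄ k) := by rw [h₄k]; exact hemod (u₁ k)
    have hPQ : u₁ i₀ % (2 * d) - u₁ k % (2 * d) = d ∨
        u₁ i₀ % (2 * d) - u₁ k % (2 * d) = -d := by
      apply gap_pm hd (hrb _).1 (hrb _).2 (hrb _).1 (hrb _).2
      have e1 : u₁ i₀ % (2 * d) - u₁ k % (2 * d) - d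
          = (u₁ i₀ % (2 * d) - u₄ i₀) - (u₁ k % (2 * d) - u₄ k) + (u₄ i₀ - u₄ k - d) := by
        ring
      rw [e1, hgap4]
      simpa using dvd_sub hPd hQd
    have hfinal : PReach u₄ (Function.update (Function.update u₄ i₀ (u₁ i₀ % (2 * d))) k
        (u₁ k % (2 * d))) :=
      endgame u₄ hd i₀ k hi₀k hgap4 _ _ hPd hQd hPQ
    have htarget : Function.update (Function.update u₄ i₀ (u₁ i₀ % (2 * d))) k
        (u₁ k % (2 * d)) = fun i => u i % (2 * dgcd u) := by
      funext x
      show _ = u x % (2 * dgcd u)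
      rw [← hdd, ← hres x]
      rcases eq_or_ne x k with rfl | hxk
      · rw [Function.update_self]
      rw [Function.update_of_ne hxk]
      rcases eq_or_ne x i₀ with rfl | hxi
      · rw [Function.update_self]
      rw [Function.update_of_ne hxi]
      rcases eq_or_ne x j with rfl | hxj
      · exact h₄j
      · exact h₄other x hxj hxk hxi
    exact h1.trans (h2.trans (hmv.trans (hmv2.trans (htarget ▸ hfinal))))

end Stmt18Aux

/-! ### multiset bookkeeping and the main theorem -/

namespace Stmt18Aux

variable {m : ℕ}

lemma univ_val_map_perm (f : Fin m → ℤ) (e : Equiv.Perm (Fin m)) :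
    (Finset.univ.val.map fun i => f (e i)) = Finset.univ.val.map f := by
  have h1 : (Finset.univ.val.map fun i => f (e i))
      = (Finset.univ.val.map (e : Fin m → Fin m)).map f := by
    rw [Multiset.map_map]
    rfl
  rw [h1]
  congr 1
  have h2 : Finset.univ.map e.toEmbedding = Finset.univ := Finset.map_univ_equiv e
  have h3 := congrArg Finset.val h2
  rwa [Finset.map_val] at h3

lemma card_fiber (f : Fin m → ℤ) (c : ℤ) :
    Multiset.count c (Finset.univ.val.map f) = Fintype.card {a : Fin m // f a = c} := by
  rw [Multiset.count_map, Fintype.card_subtype]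
  show Multiset.card _ = (Finset.filter (fun a => f a = c) Finset.univ).val.card
  rw [Finset.filter_val]
  congr 1
  apply Multiset.filter_congr
  intro x _
  exact eq_comm

lemma exists_perm_of_map_eq {f g : Fin m → ℤ}
    (h : Finset.univ.val.map f = Finset.univ.val.map g) :
    ∃ σ : Equiv.Perm (Fin m), ∀ i, f (σ i) = g i := by
  have hcard : ∀ c : ℤ, Fintype.card {a : Fin m // g a = c}
      = Fintype.card {a : Fin m // f a = c} := by
    intro c
    rw [← card_fiber, ← card_fiber, h]
  refine ⟨Equiv.ofFiberEquiv (f := g) (g := f)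
    (fun c => Fintype.equivOfCardEq (hcard c)), fun i => ?_⟩
  exact Equiv.ofFiberEquiv_map _ i

theorem vpure_iff (hm : 3 ≤ m) (v w : Fin m → ℤ) :
    VPureEquiv v w ↔ dgcd v = dgcd w ∧ ∀ i : Fin m, v i ≡ w i [ZMOD 2 * dgcd v] := by
  constructor
  · rintro ⟨β, hact, hperm⟩
    obtain ⟨hdg, hcong⟩ := word_inv β v
    rw [hact] at hdg hcong
    refine ⟨hdg.symm, fun i => ?_⟩
    have h := hcong i
    rw [hperm] at h
    simpa using h.symm
  · rintro ⟨hdg, hcong⟩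
    rcases (dgcd_nonneg v).eq_or_lt with h0 | hpos
    · -- d = 0 : congruence mod 0 means equality
      have hvw : v = w := by
        funext i
        have h := hcong i
        rw [← h0] at h
        simpa [Int.ModEq] using h
      rw [hvw]
      exact ⟨[], rfl, rfl⟩
    · have hC1 := core hm v hpos
      have hC2 := core hm w (hdg ▸ hpos)
      have hCC : (fun i => v i % (2 * dgcd v)) = fun i => w i % (2 * dgcd w) := by
        funext i
        rw [← hdg]
        exact hcong i
      rw [hCC] at hC1
      exact (hC1.trans hC2.symm).vpure hm

theorem virtual_iff (hm : 3 ≤ m) (v w : Fin m → ℤ) :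
    VirtualEquiv v w ↔
      dgcd v = dgcd w ∧ resM v (2 * dgcd v) = resM w (2 * dgcd w) := by
  constructor
  · rintro ⟨β, hact⟩
    obtain ⟨hdg, hcong⟩ := word_inv β v
    rw [hact] at hdg hcong
    refine ⟨hdg.symm, ?_⟩
    unfold resM
    rw [hdg]
    have h1 : (fun i => w i % (2 * dgcd v))
        = fun i => v ((vwordPerm β)⁻¹ i) % (2 * dgcd v) := by
      funext i
      exact hcong i
    rw [h1]
    exact (univ_val_map_perm (fun i => v i % (2 * dgcd v)) (vwordPerm β)⁻¹).symm
  · rintro ⟨hdg, hres⟩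
    unfold resM at hres
    obtain ⟨σ, hσ⟩ := exists_perm_of_map_eq hres
    obtain ⟨γ, hγa, _⟩ := gen_all (by omega : 1 ≤ m) σ
    rcases (dgcd_nonneg v).eq_or_lt with h0 | hpos
    · -- equality of entries
      have hvw : v ∘ σ = w := by
        funext i
        have h := hσ i
        rw [← hdg] at h
        rw [← h0] at h
        simpa using h
      exact ⟨γ, by rw [hγa, hvw]⟩
    · have hd' : dgcd (v ∘ σ) = dgcd v := dgcd_comp_perm v σ
      have hcong : ∀ i, (v ∘ σ) i ≡ w i [ZMOD 2 * dgcd (v ∘ σ)] := by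
        intro i
        show (v (σ i)) % _ = w i % _
        rw [hd']
        have h := hσ i
        rw [← hdg] at h
        exact h
      have hvp : VPureEquiv (v ∘ σ) w :=
        (vpure_iff hm (v ∘ σ) w).2 ⟨by rw [hd', hdg], hcong⟩
      obtain ⟨β, hβa, _⟩ := hvp
      exact ⟨γ ++ β, by rw [vwordAct_append, hγa, hβa]⟩

end Stmt18Aux

/-- for `m ≥ 3`: (i) `v ∼_v w` iff `d(v) = d(w)` and
`M(v)_{2d(v)} = M(w)_{2d(w)}`; (ii) `v ∼_{vP} w` iff `d(v) = d(w)` and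
`a_i ≡ b_i (mod 2d(v))` for all `i`. (Congruence mod 0 means equality.) -/

theorem stmt_18 (m : ℕ) (hm : 3 ≤ m) (v w : Fin m → ℤ) :
    (VirtualEquiv v w ↔
      dgcd v = dgcd w ∧ resM v (2 * dgcd v) = resM w (2 * dgcd w)) ∧
    (VPureEquiv v w ↔
      dgcd v = dgcd w ∧ ∀ i : Fin m, v i ≡ w i [ZMOD 2 * dgcd v]) :=
  ⟨Stmt18Aux.virtual_iff hm v w, Stmt18Aux.vpure_iff hm v w⟩
end

section
/- For two elements v, w ∈ ℤ², v ∼ w (Hurwitz equivalence) if and only if Δ(v) = Δ(w) and M(v)_{2d(v)} = M(w)_{2d(w)}. -/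
-- helper lemmas
lemma dgcd_two (v : Fin 2 → ℤ) : dgcd v = ((v 0 - v 1).natAbs : ℤ) := by
  unfold dgcd
  rw [show (Finset.univ : Finset (Fin 2 × Fin 2)) = {(0,0),(0,1),(1,0),(1,1)} from by decide]
  simp only [Finset.gcd_insert, Finset.gcd_singleton]
  rw [show v 0 - v 0 = 0 by ring, show v 1 - v 1 = 0 by ring,
    show v 1 - v 0 = -(v 0 - v 1) by ring]
  simp only [← Int.coe_gcd, ← Int.abs_eq_normalize, Int.gcd, Int.natAbs_neg,
    Int.natAbs_abs, Int.natAbs_zero, Int.natAbs_natCast, Nat.gcd_self]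
  simp

lemma resM_two (v : Fin 2 → ℤ) (N : ℤ) : resM v N = {v 0 % N, v 1 % N} := by
  simp [resM, show (Finset.univ.val : Multiset (Fin 2)) = {0,1} from by decide]

lemma Delta_two (v : Fin 2 → ℤ) : Delta v = v 0 - v 1 := by
  simp [Delta, Fin.sum_univ_two]; ring

lemma sigmaAct_two (i : Fin (2 - 1)) (v : Fin 2 → ℤ) :
    sigmaAct i v = ![v 1, 2 * v 1 - v 0] := by
  have hi : (i : ℕ) = 0 := by omega
  funext j
  fin_cases j <;> simp [sigmaAct, hi] <;> rfl

def vshift (v : Fin 2 → ℤ) (n : ℤ) : Fin 2 → ℤ :=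
  fun j => v 0 + (n + (j : ℕ)) * (v 1 - v 0)

lemma vshift_zero (v : Fin 2 → ℤ) : vshift v 0 = v := by
  funext j; fin_cases j <;> simp [vshift] <;> ring

lemma sigma_vshift (v : Fin 2 → ℤ) (n : ℤ) :
    sigmaAct (0 : Fin (2 - 1)) (vshift v n) = vshift v (n + 1) := by
  rw [sigmaAct_two]
  funext j; fin_cases j <;> simp [vshift] <;> ring

lemma hur_vshift (v : Fin 2 → ℤ) (n : ℤ) : HurwitzEquiv v (vshift v n) := by
  induction n using Int.induction_on with
  | zero => rw [vshift_zero]; exact Relation.EqvGen.refl v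
  | succ k ih =>
    refine Relation.EqvGen.trans _ _ _ ih (Relation.EqvGen.rel _ _ ⟨0, ?_⟩)
    rw [sigma_vshift]
  | pred k ih =>
    refine Relation.EqvGen.trans _ _ _ ih (Relation.EqvGen.symm _ _
      (Relation.EqvGen.rel _ _ ⟨0, ?_⟩))
    rw [sigma_vshift]; norm_num

lemma pair_eq {x y z t : ℤ} (h : ({x, y} : Multiset ℤ) = {z, t}) :
    (x = z ∧ y = t) ∨ (x = t ∧ y = z) := by
  rcases Multiset.cons_eq_cons.mp h with ⟨hx, hy⟩ | ⟨hne, cs, h1, h2⟩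
  · exact Or.inl ⟨hx, Multiset.singleton_inj.mp hy⟩
  · right
    rcases (Multiset.singleton_eq_cons_iff _).mp h1 with ⟨hyz, hcs⟩
    subst hcs
    rcases (Multiset.singleton_eq_cons_iff _).mp h2 with ⟨htx, -⟩
    exact ⟨htx.symm, hyz⟩

lemma forward_gen (v : Fin 2 → ℤ) (i : Fin (2 - 1)) :
    Delta v = Delta (sigmaAct i v) ∧
      resM v (2 * dgcd v) = resM (sigmaAct i v) (2 * dgcd (sigmaAct i v)) := by
  rw [sigmaAct_two]
  have hw0 : (![v 1, 2 * v 1 - v 0]) 0 = v 1 := rfl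
  have hw1 : (![v 1, 2 * v 1 - v 0]) 1 = 2 * v 1 - v 0 := rfl
  have hd : dgcd (![v 1, 2 * v 1 - v 0]) = dgcd v := by
    rw [dgcd_two, dgcd_two, hw0, hw1]
    congr 1
    rw [show v 1 - (2 * v 1 - v 0) = v 0 - v 1 by ring]
  constructor
  · rw [Delta_two, Delta_two, hw0, hw1]; ring
  · rw [resM_two, resM_two, hw0, hw1, hd]
    set N := 2 * dgcd v with hN
    have hmod : (2 * v 1 - v 0) % N = v 0 % N := by
      have hdvd : N ∣ (v 0 - (2 * v 1 - v 0)) := by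
        rw [hN, dgcd_two, show v 0 - (2 * v 1 - v 0) = 2 * -(v 1 - v 0) by ring]
        exact mul_dvd_mul_left 2 (dvd_neg.mpr
          ((Int.natAbs_dvd).mpr (by rw [show v 1 - v 0 = -(v 0 - v 1) by ring]; exact dvd_neg.mpr dvd_rfl)))
      exact (Int.modEq_iff_dvd.mpr hdvd)
    rw [hmod]
    exact (Multiset.cons_swap _ _ _)


/-- for `v, w ∈ ℤ²`, `v ∼ w` iff `Δ(v) = Δ(w)` and
`M(v)_{2d(v)} = M(w)_{2d(w)}`. -/
theorem stmt_19 (v w : Fin 2 → ℤ) :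
    HurwitzEquiv v w ↔
      Delta v = Delta w ∧ resM v (2 * dgcd v) = resM w (2 * dgcd w) := by
  constructor
  · intro h
    induction h with
    | rel x y hxy => obtain ⟨i, rfl⟩ := hxy; exact forward_gen x i
    | refl x => exact ⟨rfl, rfl⟩
    | symm x y _ ih => exact ⟨ih.1.symm, ih.2.symm⟩
    | trans x y z _ _ ih1 ih2 => exact ⟨ih1.1.trans ih2.1, ih1.2.trans ih2.2⟩
  · rintro ⟨hD, hM⟩
    rw [Delta_two, Delta_two] at hD
    have hdw : dgcd w = dgcd v := by rw [dgcd_two, dgcd_two, hD]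
    rw [hdw, resM_two, resM_two] at hM
    set N := 2 * dgcd v with hN
    by_cases h0 : v 0 = v 1
    · have hz : N = 0 := by rw [hN, dgcd_two, h0]; simp
      rw [hz] at hM
      simp only [Int.emod_zero] at hM
      have hvw : w = v := by
        rcases pair_eq hM with ⟨h1, h2⟩ | ⟨h1, h2⟩ <;>
          (funext j; fin_cases j <;> simp <;> omega)
      rw [hvw]; exact Relation.EqvGen.refl v
    · have hvN : (v 0 - v 1) ∣ N := by
        rw [hN, dgcd_two]
        exact Dvd.dvd.mul_left (Int.dvd_natAbs.mpr dvd_rfl) 2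
      have hdvd : (v 1 - v 0) ∣ (w 0 - v 0) := by
        rw [show v 1 - v 0 = -(v 0 - v 1) by ring]
        rw [neg_dvd]
        rcases pair_eq hM with ⟨h1, h2⟩ | ⟨h1, h2⟩
        · exact dvd_trans hvN (Int.ModEq.dvd (h1 : _ % N = _ % N))
        · have hNd : N ∣ w 1 - v 0 := Int.ModEq.dvd (h1 : _ % N = _ % N)
          have : (v 0 - v 1) ∣ w 1 - v 0 := dvd_trans hvN hNd
          have h2' : (v 0 - v 1) ∣ (w 1 - v 0) + (v 0 - v 1) := dvd_add this dvd_rfl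
          rwa [show (w 1 - v 0) + (v 0 - v 1) = w 0 - v 0 by
            rw [show w 0 = w 1 + (v 0 - v 1) by omega]; ring] at h2'
      obtain ⟨n, hn⟩ := hdvd
      have hw : w = vshift v n := by
        funext j; fin_cases j <;> simp [vshift]
        · linarith [hn]
        · have : w 1 = w 0 - (v 0 - v 1) := by omega
          rw [this, show w 0 = v 0 + (v 1 - v 0) * n by linarith [hn]]; ring
      rw [hw]; exact hur_vshift v n
end
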